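/- arXiv:2302.09946 — 3 statements merged into one kernel-verified Lean document; each statement's English description precedes it below -/
import Mathlib

section
/- Let (T,ν) be a σ-finite measure space, let p, q ≥ 1 be integers and 1 ≤ r ≤ min(p,q). Let f ∈ L²(ν^{⊗p}) and g ∈ L²(ν^{⊗q}) be symmetric. Then ‖f ⊗_r g‖²_{L²(T^{p+q−2r})} ≤ ‖f ⊗_{p−r} f‖_{L²(T^{2r})} · ‖g ⊗_{q−r} g‖_{L²(T^{2r})}. In particular ‖f ⊗_r g‖²_{L²(T^{p+q−2r})} ≤ ‖f ⊗_{p−r} f‖_{L²(T^{2r})} · ‖g‖²_{L²(T^q)}. -/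
open MeasureTheory

/-- The way the first `r` coordinates (integration variables `u`) and the remaining `p − r`
coordinates (the first block of the free variables `t`) are combined into an argument of a
function on `T^p`, when forming the contraction `f ⊗_r g` with `f` on `T^p`, `g` on `T^q`. -/
def glueLeft {T : Type*} (p q r : ℕ) (hrp : r ≤ p) (hrq : r ≤ q)
    (u : Fin r → T) (t : Fin (p + q - 2 * r) → T) : Fin p → T :=
  fun i => if h : (i : ℕ) < r then u ⟨i, h⟩
    else t ⟨(i : ℕ) - r, by have := i.isLt; omega⟩

/-- The way the first `r` coordinates (integration variables `u`) and the last `q − r`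
coordinates (the second block of the free variables `t`) are combined into an argument of a
function on `T^q`, when forming the contraction `f ⊗_r g` with `f` on `T^p`, `g` on `T^q`. -/
def glueRight {T : Type*} (p q r : ℕ) (hrp : r ≤ p) (hrq : r ≤ q)
    (u : Fin r → T) (t : Fin (p + q - 2 * r) → T) : Fin q → T :=
  fun j => if h : (j : ℕ) < r then u ⟨j, h⟩
    else t ⟨(p - r) + ((j : ℕ) - r), by have := j.isLt; omega⟩

/-- The `r`-th contraction `f ⊗_r g` of `f : T^p → ℝ` and `g : T^q → ℝ`:
`(f ⊗_r g)(t₁,…,t_{p+q−2r}) = ∫_{T^r} f(u, t₁,…,t_{p−r}) g(u, t_{p−r+1},…,t_{p+q−2r}) dν^{⊗r}(u)`. -/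
noncomputable def contraction {T : Type*} [MeasurableSpace T] (ν : Measure T)
    (p q r : ℕ) (hrp : r ≤ p) (hrq : r ≤ q)
    (f : (Fin p → T) → ℝ) (g : (Fin q → T) → ℝ) :
    (Fin (p + q - 2 * r) → T) → ℝ :=
  fun t => ∫ u : Fin r → T,
    f (glueLeft p q r hrp hrq u t) * g (glueRight p q r hrp hrq u t)
      ∂(Measure.pi fun _ => ν)

/-- A function on `T^n` is symmetric if it is almost everywhere invariant under permutations
of its arguments. -/
def AESymmetric {T : Type*} [MeasurableSpace T] (ν : Measure T) {n : ℕ}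
    (f : (Fin n → T) → ℝ) : Prop :=
  ∀ σ : Equiv.Perm (Fin n),
    (fun x => f (x ∘ σ)) =ᵐ[Measure.pi fun _ : Fin n => ν] f

open MeasureTheory ENNReal

set_option linter.unusedSectionVars false
set_option linter.unusedVariables false
namespace Stmt12Aux

variable {T : Type*} [MeasurableSpace T]

def glue (m n k : ℕ) (h : m + n = k) (u : Fin m → T) (s : Fin n → T) : Fin k → T :=
  fun i => if hi : (i : ℕ) < m then u ⟨i, hi⟩ else s ⟨(i : ℕ) - m, by omega⟩

def glueEquiv (m n k : ℕ) (h : m + n = k) : ((Fin m → T) × (Fin n → T)) ≃ᵐ (Fin k → T) :=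
  (MeasurableEquiv.sumPiEquivProdPi (fun _ : Fin m ⊕ Fin n => T)).symm.trans
    (MeasurableEquiv.piCongrLeft (fun _ : Fin k => T) (finSumFinEquiv.trans (finCongr h)))

lemma glueEquiv_apply (m n k : ℕ) (h : m + n = k) (u : Fin m → T) (s : Fin n → T) :
    glueEquiv m n k h (u, s) = glue m n k h u s := by
  funext i
  set e : (Fin m ⊕ Fin n) ≃ Fin k := finSumFinEquiv.trans (finCongr h) with he
  have key : ∀ j : Fin m ⊕ Fin n, glueEquiv m n k h (u, s) (e j) = Sum.elim u s j := by
    intro j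
    simp only [glueEquiv, MeasurableEquiv.trans_apply]
    rw [MeasurableEquiv.coe_piCongrLeft]
    rw [Equiv.piCongrLeft_apply_apply]
    cases j <;> rfl
  by_cases hi : (i : ℕ) < m
  · have : i = e (Sum.inl ⟨i, hi⟩) := by
      simp [he, finSumFinEquiv, Fin.ext_iff]
    rw [this, key]
    simp [glue, hi, ← this]
  · have : i = e (Sum.inr ⟨(i : ℕ) - m, by have := i.isLt; omega⟩) := by
      simp [he, finSumFinEquiv, Fin.ext_iff]
      omega
    rw [this, key]
    simp [glue, hi, ← this]


lemma glueEquiv_measurePreserving (ν : Measure T) [SigmaFinite ν] (m n k : ℕ) (h : m + n = k) :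
    MeasurePreserving (glueEquiv (T := T) m n k h)
      ((Measure.pi fun _ : Fin m => ν).prod (Measure.pi fun _ : Fin n => ν))
      (Measure.pi fun _ : Fin k => ν) := by
  have h1 := MeasureTheory.measurePreserving_sumPiEquivProdPi_symm
    (fun _ : Fin m ⊕ Fin n => ν)
  have h2 := MeasureTheory.measurePreserving_piCongrLeft (fun _ : Fin k => ν)
    (finSumFinEquiv.trans (finCongr h))
  exact h2.comp h1

variable {A B C : Type*} [MeasurableSpace A] [MeasurableSpace B] [MeasurableSpace C]

lemma sq_eLpNorm_two {μ : Measure A} (f : A → ℝ) :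
    eLpNorm f 2 μ ^ 2 = ∫⁻ x, (‖f x‖₊ : ℝ≥0∞) ^ (2 : ℝ) ∂μ := by
  rw [eLpNorm_eq_lintegral_rpow_enorm_toReal two_ne_zero ENNReal.ofNat_ne_top]
  simp only [ENNReal.toReal_ofNat, enorm_eq_nnnorm]
  rw [← ENNReal.rpow_natCast _ 2, ← ENNReal.rpow_mul]
  norm_num

lemma eLpNorm_two_eq {μ : Measure A} (f : A → ℝ) :
    eLpNorm f 2 μ = (∫⁻ x, (‖f x‖₊ : ℝ≥0∞) ^ (2 : ℝ) ∂μ) ^ (1 / 2 : ℝ) := by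
  rw [eLpNorm_eq_lintegral_rpow_enorm_toReal two_ne_zero ENNReal.ofNat_ne_top]
  simp [enorm_eq_nnnorm]

lemma lintegral_mul_le_sqrt {μ : Measure A} {f g : A → ℝ≥0∞}
    (hf : AEMeasurable f μ) (hg : AEMeasurable g μ) :
    ∫⁻ a, f a * g a ∂μ
      ≤ (∫⁻ a, f a ^ (2 : ℝ) ∂μ) ^ (1 / 2 : ℝ) * (∫⁻ a, g a ^ (2 : ℝ) ∂μ) ^ (1 / 2 : ℝ) := by
  have hpq : Real.HolderConjugate 2 2 := Real.HolderConjugate.two_two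
  exact ENNReal.lintegral_mul_le_Lp_mul_Lq μ hpq hf hg


lemma core2 {μ : Measure A} {μ₂ : Measure C} [SigmaFinite μ] [SigmaFinite μ₂]
    {G : A × C → ℝ} (hGm : StronglyMeasurable G) :
    eLpNorm (fun uu : A × A => ∫ v, G (uu.1, v) * G (uu.2, v) ∂μ₂) 2 (μ.prod μ)
      ≤ eLpNorm G 2 (μ.prod μ₂) ^ 2 := by
  have hGme : Measurable G := hGm.measurable
  set Bf : A → ℝ≥0∞ := fun u => ∫⁻ v, (‖G (u, v)‖₊ : ℝ≥0∞) ^ (2 : ℝ) ∂μ₂ with hBf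
  have hBmeas : Measurable Bf := by
    have : Measurable fun z : A × C => (‖G z‖₊ : ℝ≥0∞) ^ (2 : ℝ) := by fun_prop
    exact this.lintegral_prod_right'

  have hslice : ∀ u : A, Measurable fun v => (‖G (u, v)‖₊ : ℝ≥0∞) := by fun_prop
  have hpt : ∀ uu : A × A,
      (‖∫ v, G (uu.1, v) * G (uu.2, v) ∂μ₂‖₊ : ℝ≥0∞) ^ (2 : ℝ) ≤ Bf uu.1 * Bf uu.2 := by
    intro uu
    have h1 : (‖∫ v, G (uu.1, v) * G (uu.2, v) ∂μ₂‖₊ : ℝ≥0∞)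
        ≤ ∫⁻ v, (‖G (uu.1, v)‖₊ : ℝ≥0∞) * ‖G (uu.2, v)‖₊ ∂μ₂ := by
      refine (enorm_integral_le_lintegral_enorm _).trans_eq ?_
      refine lintegral_congr fun v => ?_
      simp [nnnorm_mul, enorm_eq_nnnorm]
    have h2 : ∫⁻ v, (‖G (uu.1, v)‖₊ : ℝ≥0∞) * ‖G (uu.2, v)‖₊ ∂μ₂
        ≤ (Bf uu.1) ^ (1 / 2 : ℝ) * (Bf uu.2) ^ (1 / 2 : ℝ) :=
      lintegral_mul_le_sqrt (hslice uu.1).aemeasurable (hslice uu.2).aemeasurable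
    calc (‖∫ v, G (uu.1, v) * G (uu.2, v) ∂μ₂‖₊ : ℝ≥0∞) ^ (2 : ℝ)
        ≤ ((Bf uu.1) ^ (1 / 2 : ℝ) * (Bf uu.2) ^ (1 / 2 : ℝ)) ^ (2 : ℝ) :=
          ENNReal.rpow_le_rpow (h1.trans h2) (by norm_num)
      _ = Bf uu.1 * Bf uu.2 := by
          rw [ENNReal.mul_rpow_of_nonneg _ _ (by norm_num), ← ENNReal.rpow_mul,
            ← ENNReal.rpow_mul]
          norm_num
  have hBint : ∫⁻ u, Bf u ∂μ = eLpNorm G 2 (μ.prod μ₂) ^ 2 := by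
    rw [sq_eLpNorm_two, lintegral_prod]
    fun_prop
  calc eLpNorm (fun uu : A × A => ∫ v, G (uu.1, v) * G (uu.2, v) ∂μ₂) 2 (μ.prod μ)
      = (∫⁻ uu : A × A, (‖∫ v, G (uu.1, v) * G (uu.2, v) ∂μ₂‖₊ : ℝ≥0∞) ^ (2 : ℝ)
          ∂(μ.prod μ)) ^ (1 / 2 : ℝ) := eLpNorm_two_eq _
    _ ≤ (∫⁻ uu : A × A, Bf uu.1 * Bf uu.2 ∂(μ.prod μ)) ^ (1 / 2 : ℝ) :=
        ENNReal.rpow_le_rpow (lintegral_mono hpt) (by norm_num)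
    _ = ((∫⁻ u, Bf u ∂μ) * ∫⁻ u, Bf u ∂μ) ^ (1 / 2 : ℝ) := by
        rw [lintegral_prod_mul hBmeas.aemeasurable hBmeas.aemeasurable]
    _ = ∫⁻ u, Bf u ∂μ := by
        rw [← sq, ← ENNReal.rpow_natCast _ 2, ← ENNReal.rpow_mul]
        norm_num
    _ = eLpNorm G 2 (μ.prod μ₂) ^ 2 := hBint


lemma core1 {μ : Measure A} {μ₁ : Measure B} {μ₂ : Measure C}
    [SigmaFinite μ] [SigmaFinite μ₁] [SigmaFinite μ₂]
    {F : A × B → ℝ} {G : A × C → ℝ}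
    (hFm : StronglyMeasurable F) (hGm : StronglyMeasurable G)
    (hF : eLpNorm F 2 (μ.prod μ₁) < ⊤) (hG : eLpNorm G 2 (μ.prod μ₂) < ⊤) :
    eLpNorm (fun sv : B × C => ∫ u, F (u, sv.1) * G (u, sv.2) ∂μ) 2 (μ₁.prod μ₂) ^ 2
      ≤ eLpNorm (fun uu : A × A => ∫ s, F (uu.1, s) * F (uu.2, s) ∂μ₁) 2 (μ.prod μ)
        * eLpNorm (fun uu : A × A => ∫ v, G (uu.1, v) * G (uu.2, v) ∂μ₂) 2 (μ.prod μ) := by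
  have hFme : Measurable F := hFm.measurable
  have hGme : Measurable G := hGm.measurable
  set H : B × C → ℝ := fun sv => ∫ u, F (u, sv.1) * G (u, sv.2) ∂μ with hH
  set CF : A × A → ℝ := fun uu => ∫ s, F (uu.1, s) * F (uu.2, s) ∂μ₁ with hCF
  set CG : A × A → ℝ := fun uu => ∫ v, G (uu.1, v) * G (uu.2, v) ∂μ₂ with hCG
  set Φ : (A × A) × (B × C) → ℝ := fun z =>
    (F (z.1.1, z.2.1) * F (z.1.2, z.2.1)) * (G (z.1.1, z.2.2) * G (z.1.2, z.2.2)) with hPhi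
  have hΦme : Measurable Φ := by fun_prop
  set Af : A → ℝ≥0∞ := fun u => ∫⁻ s, (‖F (u, s)‖₊ : ℝ≥0∞) ^ (2 : ℝ) ∂μ₁ with hAf
  set Bf : A → ℝ≥0∞ := fun u => ∫⁻ v, (‖G (u, v)‖₊ : ℝ≥0∞) ^ (2 : ℝ) ∂μ₂ with hBf
  have hAmeas : Measurable Af := by
    have : Measurable fun z : A × B => (‖F z‖₊ : ℝ≥0∞) ^ (2 : ℝ) := by fun_prop
    exact this.lintegral_prod_right'
  have hBmeas : Measurable Bf := by
    have : Measurable fun z : A × C => (‖G z‖₊ : ℝ≥0∞) ^ (2 : ℝ) := by fun_prop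
    exact this.lintegral_prod_right'
  have hAint : ∫⁻ u, Af u ∂μ = eLpNorm F 2 (μ.prod μ₁) ^ 2 := by
    rw [sq_eLpNorm_two, lintegral_prod]; fun_prop
  have hBint : ∫⁻ u, Bf u ∂μ = eLpNorm G 2 (μ.prod μ₂) ^ 2 := by
    rw [sq_eLpNorm_two, lintegral_prod]; fun_prop
  -- Integrability of Φ on the big product space
  have hInt : Integrable Φ ((μ.prod μ).prod (μ₁.prod μ₂)) := by
    refine ⟨hΦme.aestronglyMeasurable, ?_⟩
    show (∫⁻ z, (‖Φ z‖₊ : ℝ≥0∞) ∂((μ.prod μ).prod (μ₁.prod μ₂))) < ⊤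
    have step1 : ∫⁻ z, (‖Φ z‖₊ : ℝ≥0∞) ∂((μ.prod μ).prod (μ₁.prod μ₂))
        = ∫⁻ uu : A × A, ∫⁻ sv : B × C, (‖Φ (uu, sv)‖₊ : ℝ≥0∞) ∂(μ₁.prod μ₂) ∂(μ.prod μ) := by
      rw [lintegral_prod]; fun_prop
    have step2 : ∀ uu : A × A, ∫⁻ sv : B × C, (‖Φ (uu, sv)‖₊ : ℝ≥0∞) ∂(μ₁.prod μ₂)
        ≤ ((Af uu.1) ^ (1 / 2 : ℝ) * (Af uu.2) ^ (1 / 2 : ℝ))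
          * ((Bf uu.1) ^ (1 / 2 : ℝ) * (Bf uu.2) ^ (1 / 2 : ℝ)) := by
      intro uu
      have heq : ∫⁻ sv : B × C, (‖Φ (uu, sv)‖₊ : ℝ≥0∞) ∂(μ₁.prod μ₂)
          = (∫⁻ s, (‖F (uu.1, s)‖₊ : ℝ≥0∞) * ‖F (uu.2, s)‖₊ ∂μ₁)
            * ∫⁻ v, (‖G (uu.1, v)‖₊ : ℝ≥0∞) * ‖G (uu.2, v)‖₊ ∂μ₂ := by
        rw [← lintegral_prod_mul (by fun_prop) (by fun_prop)]
        refine lintegral_congr fun sv => ?_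
        simp [hPhi, nnnorm_mul]
      rw [heq]
      exact mul_le_mul' (lintegral_mul_le_sqrt (by fun_prop) (by fun_prop))
        (lintegral_mul_le_sqrt (by fun_prop) (by fun_prop))
    have step3 : ∫⁻ uu : A × A,
        ((Af uu.1) ^ (1 / 2 : ℝ) * (Af uu.2) ^ (1 / 2 : ℝ))
          * ((Bf uu.1) ^ (1 / 2 : ℝ) * (Bf uu.2) ^ (1 / 2 : ℝ)) ∂(μ.prod μ)
        = (∫⁻ u, (Af u) ^ (1 / 2 : ℝ) * (Bf u) ^ (1 / 2 : ℝ) ∂μ)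
          * ∫⁻ u, (Af u) ^ (1 / 2 : ℝ) * (Bf u) ^ (1 / 2 : ℝ) ∂μ := by
      rw [← lintegral_prod_mul (by fun_prop) (by fun_prop)]
      exact lintegral_congr fun uu => by ring
    have step4 : ∫⁻ u, (Af u) ^ (1 / 2 : ℝ) * (Bf u) ^ (1 / 2 : ℝ) ∂μ
        ≤ (∫⁻ u, Af u ∂μ) ^ (1 / 2 : ℝ) * (∫⁻ u, Bf u ∂μ) ^ (1 / 2 : ℝ) := by
      have := lintegral_mul_le_sqrt (μ := μ)
        (f := fun u => (Af u) ^ (1 / 2 : ℝ)) (g := fun u => (Bf u) ^ (1 / 2 : ℝ))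
        (by fun_prop) (by fun_prop)
      refine this.trans_eq ?_
      have hc : ∀ h : A → ℝ≥0∞, ∫⁻ u, (h u ^ (1 / 2 : ℝ)) ^ (2 : ℝ) ∂μ = ∫⁻ u, h u ∂μ := by
        intro h
        refine lintegral_congr fun u => ?_
        rw [← ENNReal.rpow_mul]
        norm_num
      rw [hc Af, hc Bf]
    have hfin : (∫⁻ u, Af u ∂μ) ^ (1 / 2 : ℝ) * (∫⁻ u, Bf u ∂μ) ^ (1 / 2 : ℝ) < ⊤ := by
      apply ENNReal.mul_lt_top
      · exact ENNReal.rpow_lt_top_of_nonneg (by norm_num)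
          (by rw [hAint]; exact (pow_lt_top hF).ne)
      · exact ENNReal.rpow_lt_top_of_nonneg (by norm_num)
          (by rw [hBint]; exact (pow_lt_top hG).ne)
    calc ∫⁻ z, (‖Φ z‖₊ : ℝ≥0∞) ∂((μ.prod μ).prod (μ₁.prod μ₂))
        = _ := step1
      _ ≤ ∫⁻ uu : A × A,
            ((Af uu.1) ^ (1 / 2 : ℝ) * (Af uu.2) ^ (1 / 2 : ℝ))
              * ((Bf uu.1) ^ (1 / 2 : ℝ) * (Bf uu.2) ^ (1 / 2 : ℝ)) ∂(μ.prod μ) :=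
          lintegral_mono step2
      _ = _ := step3
      _ ≤ ((∫⁻ u, Af u ∂μ) ^ (1 / 2 : ℝ) * (∫⁻ u, Bf u ∂μ) ^ (1 / 2 : ℝ))
            * ((∫⁻ u, Af u ∂μ) ^ (1 / 2 : ℝ) * (∫⁻ u, Bf u ∂μ) ^ (1 / 2 : ℝ)) :=
          mul_le_mul' step4 step4
      _ < ⊤ := ENNReal.mul_lt_top hfin hfin
  -- pointwise expansion of the square
  have hsq : ∀ sv : B × C, ∫ uu : A × A, Φ (uu, sv) ∂(μ.prod μ) = H sv ^ 2 := by
    intro sv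
    have := integral_prod_mul (μ := μ) (ν := μ)
      (fun u => F (u, sv.1) * G (u, sv.2)) (fun u => F (u, sv.1) * G (u, sv.2))
    rw [sq, hH, ← this]
    exact integral_congr_ae (.of_forall fun z => by simp only [hPhi]; ring)
  have hCFCG : ∀ uu : A × A, ∫ sv : B × C, Φ (uu, sv) ∂(μ₁.prod μ₂) = CF uu * CG uu := by
    intro uu
    exact integral_prod_mul (μ := μ₁) (ν := μ₂)
      (fun s => F (uu.1, s) * F (uu.2, s)) (fun v => G (uu.1, v) * G (uu.2, v))
  have hCFCGint : Integrable (fun uu : A × A => CF uu * CG uu) (μ.prod μ) := by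
    refine (hInt.integral_prod_left).congr (.of_forall fun uu => hCFCG uu)
  have hCFm : StronglyMeasurable CF := by
    apply MeasureTheory.StronglyMeasurable.integral_prod_right'
      (f := fun z : (A × A) × B => F (z.1.1, z.2) * F (z.1.2, z.2))
    exact Measurable.stronglyMeasurable (by fun_prop)
  have hCGm : StronglyMeasurable CG := by
    apply MeasureTheory.StronglyMeasurable.integral_prod_right'
      (f := fun z : (A × A) × C => G (z.1.1, z.2) * G (z.1.2, z.2))
    exact Measurable.stronglyMeasurable (by fun_prop)
  calc eLpNorm H 2 (μ₁.prod μ₂) ^ 2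
      = ∫⁻ sv, (‖H sv‖₊ : ℝ≥0∞) ^ (2 : ℝ) ∂(μ₁.prod μ₂) := sq_eLpNorm_two _
    _ = ∫⁻ sv, ENNReal.ofReal (∫ uu : A × A, Φ (uu, sv) ∂(μ.prod μ)) ∂(μ₁.prod μ₂) := by
        refine lintegral_congr fun sv => ?_
        rw [hsq sv]
        rw [show ((‖H sv‖₊ : ℝ≥0∞)) = ENNReal.ofReal |H sv| from
          (Real.enorm_eq_ofReal_abs _)]
        rw [ENNReal.ofReal_rpow_of_nonneg (abs_nonneg _) (by norm_num)]
        congr 1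
        rw [show (2 : ℝ) = ((2 : ℕ) : ℝ) by norm_num, Real.rpow_natCast, sq_abs]
    _ = ENNReal.ofReal (∫ sv : B × C, (∫ uu : A × A, Φ (uu, sv) ∂(μ.prod μ))
          ∂(μ₁.prod μ₂)) := by
        rw [ofReal_integral_eq_lintegral_ofReal hInt.integral_prod_right
          (.of_forall fun sv => by
            simp only [Pi.zero_apply]
            show (0 : ℝ) ≤ ∫ uu : A × A, Φ (uu, sv) ∂(μ.prod μ)
            rw [hsq sv]
            positivity)]
    _ = ENNReal.ofReal (∫ uu : A × A, (∫ sv : B × C, Φ (uu, sv) ∂(μ₁.prod μ₂))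
          ∂(μ.prod μ)) := by
        congr 1
        exact (integral_integral_swap (f := fun uu sv => Φ (uu, sv)) hInt).symm
    _ = ENNReal.ofReal (∫ uu : A × A, CF uu * CG uu ∂(μ.prod μ)) := by
        congr 1
        exact integral_congr_ae (.of_forall fun uu => hCFCG uu)
    _ ≤ ∫⁻ uu : A × A, (‖CF uu * CG uu‖₊ : ℝ≥0∞) ∂(μ.prod μ) := by
        simp only [← enorm_eq_nnnorm]
        rw [← ofReal_integral_norm_eq_lintegral_enorm hCFCGint]
        exact ENNReal.ofReal_le_ofReal
          ((le_abs_self _).trans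
            (by rw [← Real.norm_eq_abs]; exact norm_integral_le_integral_norm _))
    _ = ∫⁻ uu : A × A, (‖CF uu‖₊ : ℝ≥0∞) * ‖CG uu‖₊ ∂(μ.prod μ) := by
        refine lintegral_congr fun uu => ?_
        simp [nnnorm_mul]
    _ ≤ (∫⁻ uu : A × A, (‖CF uu‖₊ : ℝ≥0∞) ^ (2 : ℝ) ∂(μ.prod μ)) ^ (1 / 2 : ℝ)
          * (∫⁻ uu : A × A, (‖CG uu‖₊ : ℝ≥0∞) ^ (2 : ℝ) ∂(μ.prod μ)) ^ (1 / 2 : ℝ) :=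
        lintegral_mul_le_sqrt
          (hCFm.measurable.nnnorm.coe_nnreal_ennreal.aemeasurable)
          (hCGm.measurable.nnnorm.coe_nnreal_ennreal.aemeasurable)
    _ = eLpNorm CF 2 (μ.prod μ) * eLpNorm CG 2 (μ.prod μ) := by
        rw [eLpNorm_two_eq, eLpNorm_two_eq]


lemma glueLeft_glue (p q r : ℕ) (hrp : r ≤ p) (hrq : r ≤ q)
    (hk : (p - r) + (q - r) = p + q - 2 * r) (ha : r + (p - r) = p)
    (u : Fin r → T) (s : Fin (p - r) → T) (v : Fin (q - r) → T) :
    glueLeft p q r hrp hrq u (glue (p - r) (q - r) (p + q - 2 * r) hk s v)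
      = glue r (p - r) p ha u s := by
  funext i
  simp only [glueLeft, glue]
  by_cases hi : (i : ℕ) < r
  · simp [hi]
  · have h2 : (i : ℕ) - r < p - r := by have := i.isLt; omega
    simp [hi, h2]

lemma glueRight_glue (p q r : ℕ) (hrp : r ≤ p) (hrq : r ≤ q)
    (hk : (p - r) + (q - r) = p + q - 2 * r) (hb : r + (q - r) = q)
    (u : Fin r → T) (s : Fin (p - r) → T) (v : Fin (q - r) → T) :
    glueRight p q r hrp hrq u (glue (p - r) (q - r) (p + q - 2 * r) hk s v)
      = glue r (q - r) q hb u v := by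
  funext j
  simp only [glueRight, glue]
  by_cases hj : (j : ℕ) < r
  · simp [hj]
  · have h2 : ¬ ((p - r) + ((j : ℕ) - r) < p - r) := by omega
    simp only [hj, dif_neg, h2, dite_false]
    congr 1
    ext
    simp only [Fin.val_mk]
    omega

lemma glueLeft_glue2 (p r : ℕ) (hrp : r ≤ p)
    (hk : r + r = p + p - 2 * (p - r)) (hc : (p - r) + r = p)
    (s : Fin (p - r) → T) (u u' : Fin r → T) :
    glueLeft p p (p - r) (Nat.sub_le p r) (Nat.sub_le p r) s
        (glue r r (p + p - 2 * (p - r)) hk u u')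
      = glue (p - r) r p hc s u := by
  funext i
  simp only [glueLeft, glue]
  by_cases hi : (i : ℕ) < p - r
  · simp [hi]
  · have h2 : (i : ℕ) - (p - r) < r := by have := i.isLt; omega
    simp [hi, h2]

lemma glueRight_glue2 (p r : ℕ) (hrp : r ≤ p)
    (hk : r + r = p + p - 2 * (p - r)) (hc : (p - r) + r = p)
    (s : Fin (p - r) → T) (u u' : Fin r → T) :
    glueRight p p (p - r) (Nat.sub_le p r) (Nat.sub_le p r) s
        (glue r r (p + p - 2 * (p - r)) hk u u')
      = glue (p - r) r p hc s u' := by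
  funext j
  simp only [glueRight, glue]
  by_cases hj : (j : ℕ) < p - r
  · simp [hj]
  · have h2 : ¬ ((p - (p - r)) + ((j : ℕ) - (p - r)) < r) := by omega
    simp only [hj, dif_neg, h2, dite_false]
    congr 1
    ext
    simp only [Fin.val_mk]
    omega


section AE

variable (ν : Measure T) [SigmaFinite ν]

/-- Pull back an a.e. equality on `T^k` through the gluing map. -/
lemma ae_glue_of_ae {m n k : ℕ} (h : m + n = k) {φ ψ : (Fin k → T) → ℝ}
    (hφψ : φ =ᵐ[Measure.pi fun _ : Fin k => ν] ψ) :
    ∀ᵐ z ∂((Measure.pi fun _ : Fin m => ν).prod (Measure.pi fun _ : Fin n => ν)),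
      φ (glue m n k h z.1 z.2) = ψ (glue m n k h z.1 z.2) := by
  have := (glueEquiv_measurePreserving ν m n k h).quasiMeasurePreserving.ae_eq hφψ
  filter_upwards [this] with z hz
  have hz' : φ (glueEquiv m n k h z) = ψ (glueEquiv m n k h z) := hz
  rwa [show z = (z.1, z.2) from rfl, glueEquiv_apply] at hz'

/-- Slice an a.e. statement on a product in the first coordinate. -/
lemma slice_fst {α β : Type*} [MeasurableSpace α] [MeasurableSpace β]
    {μ : Measure α} {μ' : Measure β} [SFinite μ'] {F F' : α × β → ℝ}
    (h : F =ᵐ[μ.prod μ'] F') :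
    ∀ᵐ x ∂μ, (fun y => F (x, y)) =ᵐ[μ'] fun y => F' (x, y) :=
  MeasureTheory.Measure.ae_ae_of_ae_prod h

lemma slice_snd {α β : Type*} [MeasurableSpace α] [MeasurableSpace β]
    {μ : Measure α} {μ' : Measure β} [SFinite μ] [SFinite μ'] {F F' : α × β → ℝ}
    (h : F =ᵐ[μ.prod μ'] F') :
    ∀ᵐ y ∂μ', (fun x => F (x, y)) =ᵐ[μ] fun x => F' (x, y) := by
  have hsw : (fun z : β × α => F (z.2, z.1)) =ᵐ[μ'.prod μ] fun z => F' (z.2, z.1) :=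
    (MeasureTheory.Measure.measurePreserving_swap (μ := μ') (ν := μ)).quasiMeasurePreserving.ae h
  exact MeasureTheory.Measure.ae_ae_of_ae_prod hsw

lemma ae_pair_fst {α β : Type*} [MeasurableSpace α] [MeasurableSpace β]
    {μ : Measure α} {μ' : Measure β} [SFinite μ'] {P : α → Prop}
    (h : ∀ᵐ x ∂μ, P x) : ∀ᵐ z ∂μ.prod μ', P z.1 :=
  MeasureTheory.Measure.quasiMeasurePreserving_fst.ae h

lemma ae_pair_snd {α β : Type*} [MeasurableSpace α] [MeasurableSpace β]
    {μ : Measure α} {μ' : Measure β} [SFinite μ] [SFinite μ'] {P : β → Prop}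
    (h : ∀ᵐ y ∂μ', P y) : ∀ᵐ z ∂μ.prod μ', P z.2 :=
  MeasureTheory.Measure.quasiMeasurePreserving_snd.ae h

/-- Using symmetry of `f`, the two ways of gluing agree almost everywhere. -/
lemma symm_swap {p r : ℕ} (hp : 1 ≤ p) (hr : 1 ≤ r) (hrp : r ≤ p)
    (ha : r + (p - r) = p) (hc : (p - r) + r = p)
    {f : (Fin p → T) → ℝ} (hfs : AESymmetric ν f) :
    ∀ᵐ us : (Fin r → T) × (Fin (p - r) → T)
        ∂((Measure.pi fun _ : Fin r => ν).prod (Measure.pi fun _ : Fin (p - r) => ν)),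
      f (glue r (p - r) p ha us.1 us.2) = f (glue (p - r) r p hc us.2 us.1) := by
  haveI : NeZero p := ⟨by omega⟩
  set c : Fin p := ⟨p - r, by omega⟩ with hcdef
  set σ : Equiv.Perm (Fin p) := Equiv.addRight c with hσ
  have key : ∀ (u : Fin r → T) (s : Fin (p - r) → T),
      glue r (p - r) p ha u s = (glue (p - r) r p hc s u) ∘ σ := by
    intro u s
    funext i
    have hval : ((σ i : Fin p) : ℕ) = if (i : ℕ) < r then (i : ℕ) + (p - r)
        else (i : ℕ) - r := by
      have : ((σ i : Fin p) : ℕ) = ((i : ℕ) + (p - r)) % p := by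
        simp [hσ, hcdef, Fin.add_def]
      rw [this]
      by_cases hi : (i : ℕ) < r
      · rw [Nat.mod_eq_of_lt (by omega)]
        simp [hi]
      · have h1 : (i : ℕ) + (p - r) - p = (i : ℕ) - r := by omega
        have h2 : ((i : ℕ) + (p - r)) % p = (i : ℕ) - r := by
          rw [Nat.mod_eq_sub_mod (by omega), h1, Nat.mod_eq_of_lt (by have := i.isLt; omega)]
        rw [h2]
        simp [hi]
    simp only [Function.comp_apply, glue]
    by_cases hi : (i : ℕ) < r
    · have h3 : ¬ (((σ i : Fin p) : ℕ) < p - r) := by rw [hval, if_pos hi]; omega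
      rw [dif_pos hi, dif_neg h3]
      congr 1
      ext
      simp only [Fin.val_mk]
      rw [hval, if_pos hi]
      omega
    · have h3 : ((σ i : Fin p) : ℕ) < p - r := by
        rw [hval, if_neg hi]; have := i.isLt; omega
      rw [dif_neg hi, dif_pos h3]
      congr 1
      ext
      simp only [Fin.val_mk]
      rw [hval, if_neg hi]
  have hae := hfs σ
  have hpull := (glueEquiv_measurePreserving ν (p - r) r p hc).quasiMeasurePreserving.ae_eq hae
  have hswap := (MeasureTheory.Measure.measurePreserving_swap
    (μ := Measure.pi fun _ : Fin r => ν) (ν := Measure.pi fun _ : Fin (p - r) => ν)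
    ).quasiMeasurePreserving.ae hpull
  filter_upwards [hswap] with us hus
  have : f ((glueEquiv (p - r) r p hc (us.2, us.1)) ∘ σ)
      = f (glueEquiv (p - r) r p hc (us.2, us.1)) := hus
  rw [glueEquiv_apply] at this
  rw [key us.1 us.2, this]

end AE


section Eval

variable (ν : Measure T) [SigmaFinite ν]

lemma contraction_glue_eval (p q r : ℕ) (hrp : r ≤ p) (hrq : r ≤ q)
    (hk : (p - r) + (q - r) = p + q - 2 * r) (ha : r + (p - r) = p) (hb : r + (q - r) = q)
    (f : (Fin p → T) → ℝ) (g : (Fin q → T) → ℝ) (s : Fin (p - r) → T) (v : Fin (q - r) → T) :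
    contraction ν p q r hrp hrq f g (glue (p - r) (q - r) (p + q - 2 * r) hk s v)
      = ∫ u, f (glue r (p - r) p ha u s) * g (glue r (q - r) q hb u v)
          ∂(Measure.pi fun _ : Fin r => ν) := by
  simp only [contraction, glueLeft_glue p q r hrp hrq hk ha,
    glueRight_glue p q r hrp hrq hk hb]

lemma contraction_self_glue_eval (p r : ℕ) (hrp : r ≤ p)
    (hk : r + r = p + p - 2 * (p - r)) (hc : (p - r) + r = p)
    (f : (Fin p → T) → ℝ) (u u' : Fin r → T) :
    contraction ν p p (p - r) (Nat.sub_le p r) (Nat.sub_le p r) f f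
        (glue r r (p + p - 2 * (p - r)) hk u u')
      = ∫ s, f (glue (p - r) r p hc s u) * f (glue (p - r) r p hc s u')
          ∂(Measure.pi fun _ : Fin (p - r) => ν) := by
  simp only [contraction, glueLeft_glue2 p r hrp hk hc, glueRight_glue2 p r hrp hk hc]

/-- The `eLpNorm` of the self-contraction `f ⊗_{p-r} f` equals that of the kernel
`CF (u,u') = ∫ F(u,s)F(u',s) ds` built from the (glued, strongly measurable) version of `f`. -/
lemma eLpNorm_contraction_self (p r : ℕ) (hp : 1 ≤ p) (hr : 1 ≤ r) (hrp : r ≤ p)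
    (ha : r + (p - r) = p)
    {f f' : (Fin p → T) → ℝ} (hf'm : StronglyMeasurable f')
    (hff' : f =ᵐ[Measure.pi fun _ : Fin p => ν] f') (hfs : AESymmetric ν f)
    {F : (Fin r → T) × (Fin (p - r) → T) → ℝ}
    (hFg : ∀ us, F us = f' (glue r (p - r) p ha us.1 us.2)) :
    eLpNorm (contraction ν p p (p - r) (Nat.sub_le p r) (Nat.sub_le p r) f f) 2
        (Measure.pi fun _ => ν)
      = eLpNorm (fun uu : (Fin r → T) × (Fin r → T) =>
            ∫ s, F (uu.1, s) * F (uu.2, s) ∂(Measure.pi fun _ : Fin (p - r) => ν)) 2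
          ((Measure.pi fun _ : Fin r => ν).prod (Measure.pi fun _ : Fin r => ν)) := by
  have hc : (p - r) + r = p := by omega
  have hk : r + r = p + p - 2 * (p - r) := by omega
  set μr := Measure.pi fun _ : Fin r => ν with hμr
  set μpr := Measure.pi fun _ : Fin (p - r) => ν with hμpr
  have hFm : StronglyMeasurable F := by
    have hFeq : F = f' ∘ ⇑(glueEquiv r (p - r) p ha) := by
      funext us
      rw [Function.comp_apply, show us = (us.1, us.2) from rfl, glueEquiv_apply, hFg]
    rw [hFeq]
    exact hf'm.comp_measurable (glueEquiv r (p - r) p ha).measurable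
  set CF : (Fin r → T) × (Fin r → T) → ℝ := fun uu =>
    ∫ s, F (uu.1, s) * F (uu.2, s) ∂μpr with hCFdef
  have hCFm : StronglyMeasurable CF := by
    apply MeasureTheory.StronglyMeasurable.integral_prod_right'
      (f := fun z : ((Fin r → T) × (Fin r → T)) × (Fin (p - r) → T) =>
        F (z.1.1, z.2) * F (z.1.2, z.2))
    exact ((hFm.comp_measurable (by fun_prop)).mul (hFm.comp_measurable (by fun_prop)))
  -- a.e. identity between the two kernels
  have hW : ∀ᵐ us : (Fin r → T) × (Fin (p - r) → T) ∂(μr.prod μpr),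
      f (glue (p - r) r p hc us.2 us.1) = F us := by
    filter_upwards [symm_swap ν hp hr hrp ha hc hfs, ae_glue_of_ae ν ha hff'] with us h1 h2
    rw [← h1, h2, hFg]
  have hWs : ∀ᵐ u ∂μr, ∀ᵐ s ∂μpr, f (glue (p - r) r p hc s u) = F (u, s) :=
    MeasureTheory.Measure.ae_ae_of_ae_prod hW
  have hae : (fun uu : (Fin r → T) × (Fin r → T) =>
      contraction ν p p (p - r) (Nat.sub_le p r) (Nat.sub_le p r) f f
        (glue r r (p + p - 2 * (p - r)) hk uu.1 uu.2)) =ᵐ[μr.prod μr] CF := by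
    filter_upwards [ae_pair_fst (μ' := μr) hWs, ae_pair_snd (μ := μr) hWs] with uu h1 h2
    rw [contraction_self_glue_eval ν p r hrp hk hc]
    refine integral_congr_ae ?_
    filter_upwards [h1, h2] with s e1 e2
    rw [e1, e2]
  have hEt := glueEquiv_measurePreserving ν r r (p + p - 2 * (p - r)) hk
  have hcomp : contraction ν p p (p - r) (Nat.sub_le p r) (Nat.sub_le p r) f f
      =ᵐ[Measure.pi fun _ : Fin (p + p - 2 * (p - r)) => ν]
        CF ∘ ⇑(glueEquiv r r (p + p - 2 * (p - r)) hk).symm := by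
    have h2 := (hEt.symm (glueEquiv (T := T) r r (p + p - 2 * (p - r)) hk)
      ).quasiMeasurePreserving.ae_eq hae
    refine Filter.EventuallyEq.trans (Filter.EventuallyEq.of_eq ?_) h2
    funext x
    simp only [Function.comp_apply]
    congr 1
    set y := (glueEquiv (T := T) r r (p + p - 2 * (p - r)) hk).symm x with hy
    rw [show glue r r (p + p - 2 * (p - r)) hk y.1 y.2
      = glueEquiv r r (p + p - 2 * (p - r)) hk y from (glueEquiv_apply _ _ _ _ _ _).symm]
    rw [hy, MeasurableEquiv.apply_symm_apply]
  rw [eLpNorm_congr_ae hcomp,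
    eLpNorm_comp_measurePreserving hCFm.aestronglyMeasurable (hEt.symm _)]

end Eval

end Stmt12Aux

open Stmt12Aux

/-- For symmetric `f ∈ L²(ν^{⊗p})`, `g ∈ L²(ν^{⊗q})` and `1 ≤ r ≤ min(p,q)`,
`‖f ⊗_r g‖² ≤ ‖f ⊗_{p−r} f‖ ⬝ ‖g ⊗_{q−r} g‖`, and in particular
`‖f ⊗_r g‖² ≤ ‖f ⊗_{p−r} f‖ ⬝ ‖g‖²`. -/
theorem stmt12 {T : Type*} [MeasurableSpace T] (ν : Measure T) [SigmaFinite ν]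
    (p q r : ℕ) (hp : 1 ≤ p) (hq : 1 ≤ q) (hr : 1 ≤ r) (hrp : r ≤ p) (hrq : r ≤ q)
    (f : (Fin p → T) → ℝ) (g : (Fin q → T) → ℝ)
    (hf : MemLp f 2 (Measure.pi fun _ : Fin p => ν))
    (hg : MemLp g 2 (Measure.pi fun _ : Fin q => ν))
    (hfs : AESymmetric ν f) (hgs : AESymmetric ν g) :
    eLpNorm (contraction ν p q r hrp hrq f g) 2 (Measure.pi fun _ => ν) ^ 2
        ≤ eLpNorm (contraction ν p p (p - r) (Nat.sub_le p r) (Nat.sub_le p r) f f) 2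
            (Measure.pi fun _ => ν)
          * eLpNorm (contraction ν q q (q - r) (Nat.sub_le q r) (Nat.sub_le q r) g g) 2
            (Measure.pi fun _ => ν)
      ∧
    eLpNorm (contraction ν p q r hrp hrq f g) 2 (Measure.pi fun _ => ν) ^ 2
        ≤ eLpNorm (contraction ν p p (p - r) (Nat.sub_le p r) (Nat.sub_le p r) f f) 2
            (Measure.pi fun _ => ν)
          * eLpNorm g 2 (Measure.pi fun _ : Fin q => ν) ^ 2 := by
  have ha : r + (p - r) = p := by omega
  have hb : r + (q - r) = q := by omega
  have hk : (p - r) + (q - r) = p + q - 2 * r := by omega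
  set μr := Measure.pi fun _ : Fin r => ν with hμr
  set μpr := Measure.pi fun _ : Fin (p - r) => ν with hμpr
  set μqr := Measure.pi fun _ : Fin (q - r) => ν with hμqr
  set f' := hf.1.mk f with hf'def
  have hf'm : StronglyMeasurable f' := hf.1.stronglyMeasurable_mk
  have hff' : f =ᵐ[Measure.pi fun _ : Fin p => ν] f' := hf.1.ae_eq_mk
  set g' := hg.1.mk g with hg'def
  have hg'm : StronglyMeasurable g' := hg.1.stronglyMeasurable_mk
  have hgg' : g =ᵐ[Measure.pi fun _ : Fin q => ν] g' := hg.1.ae_eq_mk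
  set F : (Fin r → T) × (Fin (p - r) → T) → ℝ :=
    fun us => f' (glue r (p - r) p ha us.1 us.2) with hFdef
  set G : (Fin r → T) × (Fin (q - r) → T) → ℝ :=
    fun uv => g' (glue r (q - r) q hb uv.1 uv.2) with hGdef
  have hFg : ∀ us, F us = f' (glue r (p - r) p ha us.1 us.2) := fun _ => rfl
  have hGg : ∀ uv, G uv = g' (glue r (q - r) q hb uv.1 uv.2) := fun _ => rfl
  have hFeq : F = f' ∘ ⇑(glueEquiv r (p - r) p ha) := by
    funext us
    rw [Function.comp_apply, show us = (us.1, us.2) from rfl, glueEquiv_apply, hFg]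
  have hGeq : G = g' ∘ ⇑(glueEquiv r (q - r) q hb) := by
    funext uv
    rw [Function.comp_apply, show uv = (uv.1, uv.2) from rfl, glueEquiv_apply, hGg]
  have hFm : StronglyMeasurable F := by
    rw [hFeq]; exact hf'm.comp_measurable (glueEquiv r (p - r) p ha).measurable
  have hGm : StronglyMeasurable G := by
    rw [hGeq]; exact hg'm.comp_measurable (glueEquiv r (q - r) q hb).measurable
  have hFL2 : eLpNorm F 2 (μr.prod μpr) < ⊤ := by
    rw [hFeq, eLpNorm_comp_measurePreserving hf'm.aestronglyMeasurable
      (glueEquiv_measurePreserving ν r (p - r) p ha), ← eLpNorm_congr_ae hff']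
    exact hf.2
  have hGL2 : eLpNorm G 2 (μr.prod μqr) < ⊤ := by
    rw [hGeq, eLpNorm_comp_measurePreserving hg'm.aestronglyMeasurable
      (glueEquiv_measurePreserving ν r (q - r) q hb), ← eLpNorm_congr_ae hgg']
    exact hg.2
  have key1 := core1 (μ := μr) (μ₁ := μpr) (μ₂ := μqr) hFm hGm hFL2 hGL2
  have key2 := core2 (μ := μr) (μ₂ := μqr) hGm
  have idCF := eLpNorm_contraction_self ν p r hp hr hrp ha hf'm hff' hfs hFg
  have idCG := eLpNorm_contraction_self ν q r hq hr hrq hb hg'm hgg' hgs hGg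
  have idG : eLpNorm G 2 (μr.prod μqr) = eLpNorm g 2 (Measure.pi fun _ : Fin q => ν) := by
    rw [hGeq, eLpNorm_comp_measurePreserving hg'm.aestronglyMeasurable
      (glueEquiv_measurePreserving ν r (q - r) q hb)]
    exact (eLpNorm_congr_ae hgg').symm
  set H : (Fin (p - r) → T) × (Fin (q - r) → T) → ℝ :=
    fun sv => ∫ u, F (u, sv.1) * G (u, sv.2) ∂μr with hHdef
  have hHm : StronglyMeasurable H := by
    rw [hHdef]
    apply MeasureTheory.StronglyMeasurable.integral_prod_right'
      (f := fun z : ((Fin (p - r) → T) × (Fin (q - r) → T)) × (Fin r → T) =>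
        F (z.2, z.1.1) * G (z.2, z.1.2))
    exact (hFm.comp_measurable (by fun_prop)).mul (hGm.comp_measurable (by fun_prop))
  have hEt := glueEquiv_measurePreserving ν (p - r) (q - r) (p + q - 2 * r) hk
  have hae : (fun sv : (Fin (p - r) → T) × (Fin (q - r) → T) =>
      contraction ν p q r hrp hrq f g (glue (p - r) (q - r) (p + q - 2 * r) hk sv.1 sv.2))
        =ᵐ[μpr.prod μqr] H := by
    have hfe : ∀ᵐ us ∂(μr.prod μpr),
        f (glue r (p - r) p ha us.1 us.2) = F us := by
      filter_upwards [ae_glue_of_ae ν ha hff'] with us h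
      rw [h, hFg]
    have hge : ∀ᵐ uv ∂(μr.prod μqr),
        g (glue r (q - r) q hb uv.1 uv.2) = G uv := by
      filter_upwards [ae_glue_of_ae ν hb hgg'] with uv h
      rw [h, hGg]
    have hfe' := slice_snd (F := fun us => f (glue r (p - r) p ha us.1 us.2)) (F' := F) hfe
    have hge' := slice_snd (F := fun uv => g (glue r (q - r) q hb uv.1 uv.2)) (F' := G) hge
    filter_upwards [ae_pair_fst (μ' := μqr) hfe', ae_pair_snd (μ := μpr) hge'] with sv h1 h2
    rw [contraction_glue_eval ν p q r hrp hrq hk ha hb]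
    refine integral_congr_ae ?_
    filter_upwards [h1, h2] with u e1 e2
    rw [show f (glue r (p - r) p ha u sv.1) = F (u, sv.1) from e1,
      show g (glue r (q - r) q hb u sv.2) = G (u, sv.2) from e2]
  have hcomp : contraction ν p q r hrp hrq f g
      =ᵐ[Measure.pi fun _ : Fin (p + q - 2 * r) => ν]
        H ∘ ⇑(glueEquiv (p - r) (q - r) (p + q - 2 * r) hk).symm := by
    have h2 := (hEt.symm (glueEquiv (T := T) (p - r) (q - r) (p + q - 2 * r) hk)
      ).quasiMeasurePreserving.ae_eq hae
    refine Filter.EventuallyEq.trans (Filter.EventuallyEq.of_eq ?_) h2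
    funext x
    simp only [Function.comp_apply]
    congr 1
    set y := (glueEquiv (T := T) (p - r) (q - r) (p + q - 2 * r) hk).symm x with hy
    rw [show glue (p - r) (q - r) (p + q - 2 * r) hk y.1 y.2
      = glueEquiv (p - r) (q - r) (p + q - 2 * r) hk y from (glueEquiv_apply _ _ _ _ _ _).symm]
    rw [hy, MeasurableEquiv.apply_symm_apply]
  have hLHS : eLpNorm (contraction ν p q r hrp hrq f g) 2 (Measure.pi fun _ => ν)
      = eLpNorm H 2 (μpr.prod μqr) := by
    rw [eLpNorm_congr_ae hcomp,
      eLpNorm_comp_measurePreserving hHm.aestronglyMeasurable (hEt.symm _)]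
  constructor
  · rw [hLHS, idCF, idCG]
    exact key1
  · rw [hLHS, idCF, ← idG]
    exact key1.trans (mul_le_mul_right key2 _)
end

section
/- Let (T,ν) be a σ-finite measure space, let 2 ≤ p < q be integers, let f ∈ L²(ν^{⊗p}) be symmetric and let h₁,…,h_q ∈ L²(ν). Then ‖f ⊗_p (h₁ ⊗̃ ⋯ ⊗̃ h_q)‖_{L²(T^{q−p})} ≤ (∏_{j=1}^q ‖h_j‖_{L²(T)}) · √(‖f ⊗_{p−1} f‖_{L²(T²)}), where h₁ ⊗̃ ⋯ ⊗̃ h_q is the symmetrization of the tensor product h₁ ⊗ ⋯ ⊗ h_q, i.e. (h₁ ⊗̃ ⋯ ⊗̃ h_q)(t₁,…,t_q) = (1/q!) Σ_{σ ∈ S_q} h_{σ(1)}(t₁)⋯h_{σ(q)}(t_q). -/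
open MeasureTheory

/-- The symmetrization `h₁ ⊗̃ ⋯ ⊗̃ h_q` of the tensor product `h₁ ⊗ ⋯ ⊗ h_q`:
`(h₁ ⊗̃ ⋯ ⊗̃ h_q)(t₁,…,t_q) = (1/q!) Σ_{σ ∈ S_q} h_{σ(1)}(t₁) ⋯ h_{σ(q)}(t_q)`. -/
noncomputable def symTensor {T : Type*} (q : ℕ) (h : Fin q → T → ℝ) :
    (Fin q → T) → ℝ :=
  fun t => (q.factorial : ℝ)⁻¹ * ∑ σ : Equiv.Perm (Fin q), ∏ i, h (σ i) (t i)


section Helpers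

lemma conj22 : Real.HolderConjugate 2 2 := Real.HolderConjugate.two_two

lemma half_half : (1:ENNReal)/1 = 1/2 + 1/2 := by
  rw [ENNReal.div_add_div_same, div_one, one_add_one_eq_two]
  exact (ENNReal.div_self two_ne_zero ENNReal.ofNat_ne_top).symm

lemma eLpNorm_two {α : Type*} [MeasurableSpace α] (μ : Measure α) (f : α → ℝ) :
    eLpNorm f 2 μ = (∫⁻ x, (‖f x‖₊ : ENNReal) ^ (2:ℝ) ∂μ) ^ (1/2 : ℝ) := by
  rw [eLpNorm_eq_lintegral_rpow_enorm_toReal two_ne_zero ENNReal.ofNat_ne_top]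
  simp only [enorm_eq_nnnorm]
  norm_num

lemma lintegral_sq_lt_top {α : Type*} [MeasurableSpace α] {μ : Measure α} {f : α → ℝ}
    (hf : MemLp f 2 μ) : ∫⁻ x, (‖f x‖₊ : ENNReal) ^ (2:ℝ) ∂μ < ⊤ := by
  have h := hf.2
  rw [eLpNorm_two] at h
  exact (ENNReal.rpow_lt_top_iff_of_pos (by norm_num)).1 h

lemma memLp_two_of {α : Type*} [MeasurableSpace α] {μ : Measure α} {f : α → ℝ}
    (hm : AEStronglyMeasurable f μ)
    (hi : ∫⁻ x, (‖f x‖₊ : ENNReal) ^ (2:ℝ) ∂μ < ⊤) : MemLp f 2 μ := by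
  refine ⟨hm, ?_⟩
  rw [eLpNorm_two]
  exact ENNReal.rpow_lt_top_of_nonneg (by norm_num) hi.ne

lemma integrable_mul_L2 {α : Type*} [MeasurableSpace α] {μ : Measure α} {f g : α → ℝ}
    (hf : MemLp f 2 μ) (hg : MemLp g 2 μ) : Integrable (fun x => f x * g x) μ := by
  have h : MemLp (f • g) 1 μ := hg.smul (φ := f) hf
  exact memLp_one_iff_integrable.1 h

lemma lint_mul_le {α : Type*} [MeasurableSpace α] (μ : Measure α) {f g : α → ENNReal}
    (hf : AEMeasurable f μ) (hg : AEMeasurable g μ) :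
    ∫⁻ x, f x * g x ∂μ ≤
      (∫⁻ x, f x ^ (2:ℝ) ∂μ) ^ (1/2:ℝ) * (∫⁻ x, g x ^ (2:ℝ) ∂μ) ^ (1/2:ℝ) := by
  simpa using ENNReal.lintegral_mul_le_Lp_mul_Lq μ conj22 hf hg

lemma lint_mul_sq_le {α : Type*} [MeasurableSpace α] (μ : Measure α) {f g : α → ENNReal}
    (hf : AEMeasurable f μ) (hg : AEMeasurable g μ) :
    (∫⁻ x, f x * g x ∂μ) ^ (2:ℝ) ≤
      (∫⁻ x, f x ^ (2:ℝ) ∂μ) * (∫⁻ x, g x ^ (2:ℝ) ∂μ) := by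
  calc (∫⁻ x, f x * g x ∂μ) ^ (2:ℝ)
      ≤ ((∫⁻ x, f x ^ (2:ℝ) ∂μ) ^ (1/2:ℝ) * (∫⁻ x, g x ^ (2:ℝ) ∂μ) ^ (1/2:ℝ)) ^ (2:ℝ) :=
        ENNReal.rpow_le_rpow (lint_mul_le μ hf hg) (by norm_num)
    _ = _ := by
        rw [ENNReal.mul_rpow_of_nonneg _ _ (by norm_num : (0:ℝ) ≤ 2),
          ← ENNReal.rpow_mul, ← ENNReal.rpow_mul]
        norm_num

lemma ofReal_sq_eq (x : ℝ) : ENNReal.ofReal (x^2) = (‖x‖₊ : ENNReal) ^ (2:ℝ) := by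
  rw [← enorm_eq_nnnorm, Real.enorm_eq_ofReal_abs, ENNReal.ofReal_rpow_of_nonneg (abs_nonneg x) (by norm_num)]
  congr 1
  rw [show |x| ^ (2:ℝ) = |x| ^ (2:ℕ) from Real.rpow_natCast |x| 2, sq_abs]

lemma coe_nnnorm_le {x : ℝ} : ENNReal.ofReal x ≤ (‖x‖₊ : ENNReal) := by
  rw [← enorm_eq_nnnorm, Real.enorm_eq_ofReal_abs]
  exact ENNReal.ofReal_le_ofReal (le_abs_self x)

lemma lintegral_sq_eq_ofReal {β : Type*} [MeasurableSpace β] {ρ : MeasureTheory.Measure β}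
    {φ : β → ℝ} (hφ : MeasureTheory.MemLp φ 2 ρ) :
    ∫⁻ x, ((‖φ x‖₊ : ENNReal)) ^ (2:ℝ) ∂ρ = ENNReal.ofReal (∫ x, φ x ^ 2 ∂ρ) := by
  rw [MeasureTheory.ofReal_integral_eq_lintegral_ofReal hφ.integrable_sq
    (Filter.Eventually.of_forall fun x => sq_nonneg _)]
  exact MeasureTheory.lintegral_congr fun x => (ofReal_sq_eq _).symm

lemma hasFiniteIntegral_of {α : Type*} [MeasurableSpace α] {μ : Measure α} {f : α → ℝ}
    (h : ∫⁻ a, (‖f a‖₊ : ENNReal) ∂μ < ⊤) : HasFiniteIntegral f μ := by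
  rw [hasFiniteIntegral_iff_norm]
  refine lt_of_le_of_lt (le_of_eq (lintegral_congr fun a => ?_)) h
  exact (ofReal_norm_eq_enorm (f a)).trans (enorm_eq_nnnorm _)

variable {T : Type*} [MeasurableSpace T] (ν : Measure T) [SigmaFinite ν]

lemma pi_eval_null {n : ℕ} (i : Fin n) {N : Set T} (hN : ν N = 0) :
    (Measure.pi fun _ : Fin n => ν) ((fun t => t i) ⁻¹' N) = 0 := by
  obtain ⟨N', hNN', hN'm, hN'0⟩ := exists_measurable_superset_of_null hN
  refine measure_mono_null (Set.preimage_mono hNN') ?_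
  rw [show ((fun t : Fin n → T => t i) ⁻¹' N') = Function.eval i ⁻¹' N' from rfl,
    Set.eval_preimage, Measure.pi_pi]
  exact Finset.prod_eq_zero (Finset.mem_univ i) (by simp [hN'0])

lemma ae_eval {n : ℕ} (i : Fin n) {P : T → Prop} (hP : ∀ᵐ x ∂ν, P x) :
    ∀ᵐ t ∂(Measure.pi fun _ : Fin n => ν), P (t i) := by
  rw [ae_iff] at hP ⊢
  exact pi_eval_null ν i hP

lemma lintegral_pi_prod : ∀ {n : ℕ} (g : Fin n → T → ENNReal), (∀ i, Measurable (g i)) →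
    ∫⁻ t, ∏ i, g i (t i) ∂(Measure.pi fun _ : Fin n => ν) = ∏ i, ∫⁻ x, g i x ∂ν := by
  intro n
  induction n with
  | zero =>
      intro g hg
      simp [lintegral_const, Measure.pi_univ]
  | succ n IH =>
      intro g hg
      have hmp := (measurePreserving_piFinSuccAbove (fun _ : Fin (n+1) => ν) 0).symm
      have hmeas : Measurable (fun t : Fin (n+1) → T => ∏ i, g i (t i)) :=
        Finset.measurable_prod _ fun i _ => (hg i).comp (measurable_pi_apply i)
      rw [← hmp.lintegral_comp hmeas]
      have hv : ∀ y : T × (Fin n → T),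
          (∏ i, g i (((MeasurableEquiv.piFinSuccAbove (fun _ : Fin (n+1) => T) 0).symm y) i))
            = g 0 y.1 * ∏ i : Fin n, g i.succ (y.2 i) := by
        rintro ⟨a, w⟩
        have : ((MeasurableEquiv.piFinSuccAbove (fun _ : Fin (n+1) => T) 0).symm (a, w))
            = Fin.cons a w := by
          funext j
          rw [MeasurableEquiv.piFinSuccAbove_symm_apply]
          simp [Fin.insertNthEquiv_apply, Fin.insertNth_zero']
        rw [this, Fin.prod_univ_succ]
        simp
      have h2m : Measurable (fun w : Fin n → T => ∏ i : Fin n, g i.succ (w i)) :=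
        Finset.measurable_prod _ fun i _ => (hg i.succ).comp (measurable_pi_apply i)
      exact (lintegral_congr hv).trans
        ((lintegral_prod_mul (hg 0).aemeasurable h2m.aemeasurable).trans
          (by rw [IH _ fun i => hg i.succ, Fin.prod_univ_succ]))

lemma eLpNorm_pi_prod {n : ℕ} (g : Fin n → T → ℝ) (hgm : ∀ i, Measurable (g i)) :
    eLpNorm (fun t => ∏ i, g i (t i)) 2 (Measure.pi fun _ : Fin n => ν)
      = ∏ i, eLpNorm (g i) 2 ν := by
  rw [eLpNorm_two]
  have hpt : ∀ t : Fin n → T, (‖∏ i, g i (t i)‖₊ : ENNReal) ^ (2:ℝ)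
      = ∏ i, (‖g i (t i)‖₊ : ENNReal) ^ (2:ℝ) := by
    intro t
    rw [nnnorm_prod, ENNReal.coe_finset_prod, ENNReal.prod_rpow_of_nonneg (by norm_num : (0:ℝ) ≤ 2)]
  simp_rw [hpt]
  rw [lintegral_pi_prod ν _ (fun i => ((hgm i).nnnorm.coe_nnreal_ennreal.pow_const (2:ℝ))),
    ← ENNReal.prod_rpow_of_nonneg (by norm_num : (0:ℝ) ≤ 1/2)]
  exact Finset.prod_congr rfl fun i _ => (eLpNorm_two ν (g i)).symm

lemma memLp_pi_prod {n : ℕ} (g : Fin n → T → ℝ) (hgm : ∀ i, Measurable (g i))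
    (hg : ∀ i, MemLp (g i) 2 ν) :
    MemLp (fun t => ∏ i, g i (t i)) 2 (Measure.pi fun _ : Fin n => ν) := by
  refine ⟨(Finset.measurable_prod _ fun i _ =>
    (hgm i).comp (measurable_pi_apply i)).aestronglyMeasurable, ?_⟩
  rw [eLpNorm_pi_prod ν g hgm]
  exact ENNReal.prod_lt_top fun i _ => (hg i).2

lemma eLpNorm_comp_mp {α β : Type*} [MeasurableSpace α] [MeasurableSpace β]
    {μ : Measure α} {ρ : Measure β} {S : α → β} (hS : MeasurePreserving S μ ρ)
    {g : β → ℝ} (hg : Measurable g) :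
    eLpNorm (fun x => g (S x)) 2 μ = eLpNorm g 2 ρ := by
  rw [eLpNorm_two, eLpNorm_two,
    hS.lintegral_comp (hg.nnnorm.coe_nnreal_ennreal.pow_const (2:ℝ))]

lemma memLp_comp_mp {α β : Type*} [MeasurableSpace α] [MeasurableSpace β]
    {μ : Measure α} {ρ : Measure β} {S : α → β} (hS : MeasurePreserving S μ ρ)
    {g : β → ℝ} (hg : Measurable g) (hgL : MemLp g 2 ρ) :
    MemLp (fun x => g (S x)) 2 μ := by
  refine ⟨(hg.comp hS.measurable).aestronglyMeasurable, ?_⟩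
  rw [eLpNorm_comp_mp hS hg]
  exact hgL.2

end Helpers

section Split

def tailIdx {p q : ℕ} (hq : p ≤ q) (i : Fin (p + q - 2*p)) : Fin q :=
  ⟨p + i.val, by have := i.isLt; omega⟩

lemma prod_split {M : Type*} [CommMonoid M] {p q : ℕ} (hq : p ≤ q) (φ : Fin q → M) :
    ∏ j : Fin q, φ j
      = (∏ j : Fin p, φ (Fin.castLE hq j)) * ∏ i : Fin (p + q - 2*p), φ (tailIdx hq i) := by
  have hpm : p + (p + q - 2*p) = q := by omega
  rw [← Equiv.prod_comp (finSumFinEquiv.trans (finCongr hpm)) φ, Fintype.prod_sum_type]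
  exact congrArg₂ (· * ·)
    (Finset.prod_congr rfl fun j _ => congrArg φ (by ext; simp))
    (Finset.prod_congr rfl fun i _ => congrArg φ (by ext; simp [tailIdx]))

end Split

section Snoc

variable {T : Type*} [MeasurableSpace T]

def finSnocEquiv {n p : ℕ} (hpn : p = n + 1) : ((Fin n → T) × T) ≃ᵐ (Fin p → T) :=
  (MeasurableEquiv.prodComm).trans
    ((MeasurableEquiv.piFinSuccAbove (fun _ : Fin (n+1) => T) (Fin.last n)).symm.trans
      (MeasurableEquiv.piCongrLeft (fun _ : Fin p => T) (finCongr hpn.symm)))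

lemma finSnocEquiv_apply {n p : ℕ} (hpn : p = n + 1) (w : Fin n → T) (a : T) (j : Fin p) :
    finSnocEquiv (T := T) hpn (w, a) j = if h : (j : ℕ) < n then w ⟨j, h⟩ else a := by
  have h1 : finSnocEquiv (T := T) hpn (w, a) j = Fin.snoc (α := fun _ => T) w a (finCongr hpn j) := by
    show (MeasurableEquiv.piCongrLeft (fun _ : Fin p => T) (finCongr hpn.symm))
      ((MeasurableEquiv.piFinSuccAbove (fun _ : Fin (n+1) => T) (Fin.last n)).symm (a, w)) j
        = _
    have h2 : ((MeasurableEquiv.piFinSuccAbove (fun _ : Fin (n+1) => T) (Fin.last n)).symm (a, w))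
        = Fin.snoc w a := by
      funext k
      rw [MeasurableEquiv.piFinSuccAbove_symm_apply]
      simp [Fin.insertNthEquiv_apply, Fin.insertNth_last']
    rw [h2, MeasurableEquiv.coe_piCongrLeft]
    have h3 : j = (finCongr hpn.symm) ((finCongr hpn) j) := by ext; simp
    conv_lhs => rw [h3]
    rw [Equiv.piCongrLeft_apply_apply]
  rw [h1]
  by_cases h : (j : ℕ) < n
  · rw [dif_pos h]
    have : (finCongr hpn j) = Fin.castSucc ⟨(j:ℕ), h⟩ := by ext; simp
    rw [this, Fin.snoc_castSucc]
  · rw [dif_neg h]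
    have : (finCongr hpn j) = Fin.last n := by
      ext; simp only [finCongr_apply, Fin.coe_cast, Fin.val_last]
      have := j.isLt; omega
    rw [this, Fin.snoc_last]

lemma measurePreserving_finSnocEquiv (ν : MeasureTheory.Measure T) [MeasureTheory.SigmaFinite ν]
    {n p : ℕ} (hpn : p = n + 1) :
    MeasureTheory.MeasurePreserving (finSnocEquiv (T := T) hpn)
      ((MeasureTheory.Measure.pi fun _ : Fin n => ν).prod ν)
      (MeasureTheory.Measure.pi fun _ : Fin p => ν) := by
  have h1 : MeasureTheory.MeasurePreserving (Prod.swap : (Fin n → T) × T → T × (Fin n → T))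
      ((MeasureTheory.Measure.pi fun _ : Fin n => ν).prod ν)
      (ν.prod (MeasureTheory.Measure.pi fun _ : Fin n => ν)) :=
    MeasureTheory.Measure.measurePreserving_swap
  have h2 := (MeasureTheory.measurePreserving_piFinSuccAbove
    (fun _ : Fin (n+1) => ν) (Fin.last n)).symm
  have h3 := MeasureTheory.measurePreserving_piCongrLeft
    (fun _ : Fin p => ν) (finCongr hpn.symm)
  have hco : ⇑(finSnocEquiv (T := T) hpn)
      = (⇑(MeasurableEquiv.piCongrLeft (fun _ : Fin p => T) (finCongr hpn.symm))
        ∘ ⇑(MeasurableEquiv.piFinSuccAbove (fun _ : Fin (n+1) => T) (Fin.last n)).symm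
        ∘ Prod.swap) := rfl
  have hc := h3.comp (h2.comp h1)
  rwa [← hco] at hc

lemma glue_eq_snoc_left {n p : ℕ} (hpn : p = n + 1) (hn hn' : n ≤ p)
    (u : Fin n → T) (t : Fin (p + p - 2*n) → T) :
    glueLeft p p n hn hn' u t = finSnocEquiv hpn (u, t ⟨0, by omega⟩) := by
  funext j
  rw [finSnocEquiv_apply]
  by_cases h : (j : ℕ) < n
  · simp [glueLeft, h]
  · rw [glueLeft, dif_neg h, dif_neg h]
    exact congrArg t (Fin.ext (by have := j.isLt; simp; omega))

lemma glue_eq_snoc_right {n p : ℕ} (hpn : p = n + 1) (hn hn' : n ≤ p)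
    (u : Fin n → T) (t : Fin (p + p - 2*n) → T) :
    glueRight p p n hn hn' u t = finSnocEquiv hpn (u, t ⟨1, by omega⟩) := by
  funext j
  rw [finSnocEquiv_apply]
  by_cases h : (j : ℕ) < n
  · simp [glueRight, h]
  · rw [glueRight, dif_neg h, dif_neg h]
    exact congrArg t (Fin.ext (by have := j.isLt; simp; omega))

end Snoc

section Key

open MeasureTheory

lemma lint_pair_bound {α : Type*} [MeasurableSpace α] (μ : Measure α) [SigmaFinite μ]
    {f g : α → ℝ} (hf : Measurable f) (hg : Measurable g) :
    ∫⁻ xy : α × α, ((‖(f xy.1 * g xy.1) * (f xy.2 * g xy.2)‖₊ : ENNReal)) ∂(μ.prod μ)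
      ≤ (∫⁻ x, ((‖f x‖₊ : ENNReal))^(2:ℝ) ∂μ) * (∫⁻ x, ((‖g x‖₊ : ENNReal))^(2:ℝ) ∂μ) := by
  have hm : Measurable fun x => ((‖f x‖₊ : ENNReal)) * ((‖g x‖₊ : ENNReal)) :=
    hf.nnnorm.coe_nnreal_ennreal.mul hg.nnnorm.coe_nnreal_ennreal
  have hpt : ∀ xy : α × α, ((‖(f xy.1 * g xy.1) * (f xy.2 * g xy.2)‖₊ : ENNReal))
      = (fun x => ((‖f x‖₊ : ENNReal)) * ((‖g x‖₊ : ENNReal))) xy.1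
        * (fun x => ((‖f x‖₊ : ENNReal)) * ((‖g x‖₊ : ENNReal))) xy.2 := by
    intro xy; simp [nnnorm_mul, ENNReal.coe_mul]
  rw [lintegral_congr hpt, lintegral_prod_mul hm.aemeasurable hm.aemeasurable]
  calc (∫⁻ x, ((‖f x‖₊ : ENNReal)) * ((‖g x‖₊ : ENNReal)) ∂μ)
        * (∫⁻ x, ((‖f x‖₊ : ENNReal)) * ((‖g x‖₊ : ENNReal)) ∂μ)
      = (∫⁻ x, ((‖f x‖₊ : ENNReal)) * ((‖g x‖₊ : ENNReal)) ∂μ) ^ (2:ℝ) := by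
        rw [ENNReal.rpow_two, pow_two]
    _ ≤ _ := lint_mul_sq_le μ hf.nnnorm.coe_nnreal_ennreal.aemeasurable
        hg.nnnorm.coe_nnreal_ennreal.aemeasurable

lemma key_bound {W A : Type*} [MeasurableSpace W] [MeasurableSpace A]
    {μ : Measure W} {κ : Measure A} [SigmaFinite μ] [SigmaFinite κ]
    {F : W × A → ℝ} (hFm : Measurable F) (hF : MemLp F 2 (μ.prod κ))
    {E : W → ℝ} (hEm : Measurable E) (hE : MemLp E 2 μ)
    {e : A → ℝ} (hem : Measurable e) (he : MemLp e 2 κ) :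
    ((‖∫ x, F x * (E x.1 * e x.2) ∂(μ.prod κ)‖₊ : ENNReal)) ≤
      eLpNorm E 2 μ * eLpNorm e 2 κ *
        (eLpNorm (fun ab : A × A => ∫ w, F (w, ab.1) * F (w, ab.2) ∂μ) 2 (κ.prod κ)) ^ (1/2 : ℝ) := by
  classical
  set G : A → ℝ := fun a => ∫ w, F (w, a) * E w ∂μ with hGdef
  set C : A × A → ℝ := fun ab => ∫ w, F (w, ab.1) * F (w, ab.2) ∂μ with hCdef
  set C' : W × W → ℝ := fun wz => ∫ a, F (wz.1, a) * F (wz.2, a) ∂κ with hC'def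
  -- measurability of the integral kernels
  have hGm : Measurable G := by
    have : StronglyMeasurable fun x : A × W => F (x.2, x.1) * E x.2 :=
      ((hFm.comp (measurable_snd.prodMk measurable_fst)).mul
        (hEm.comp measurable_snd)).stronglyMeasurable
    exact this.integral_prod_right'.measurable
  have hCm : Measurable C := by
    have : StronglyMeasurable fun x : (A × A) × W => F (x.2, x.1.1) * F (x.2, x.1.2) :=
      ((hFm.comp (measurable_snd.prodMk (measurable_fst.comp measurable_fst))).mul
        (hFm.comp (measurable_snd.prodMk (measurable_snd.comp measurable_fst)))).stronglyMeasurable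
    exact this.integral_prod_right'.measurable
  have hC'm : Measurable C' := by
    have : StronglyMeasurable fun x : (W × W) × A => F (x.1.1, x.2) * F (x.1.2, x.2) :=
      ((hFm.comp ((measurable_fst.comp measurable_fst).prodMk measurable_snd)).mul
        (hFm.comp ((measurable_snd.comp measurable_fst).prodMk measurable_snd))).stronglyMeasurable
    exact this.integral_prod_right'.measurable
  -- basic ennreal integrals
  have hIE_lt : (∫⁻ w, ((‖E w‖₊ : ENNReal))^(2:ℝ) ∂μ) < ⊤ := lintegral_sq_lt_top hE
  have hIe_lt : (∫⁻ a, ((‖e a‖₊ : ENNReal))^(2:ℝ) ∂κ) < ⊤ := lintegral_sq_lt_top he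
  have hIF_lt : (∫⁻ x, ((‖F x‖₊ : ENNReal))^(2:ℝ) ∂(μ.prod κ)) < ⊤ := lintegral_sq_lt_top hF
  have hnFm : Measurable fun x : W × A => ((‖F x‖₊ : ENNReal)) ^ (2:ℝ) :=
    hFm.nnnorm.coe_nnreal_ennreal.pow_const _
  set AW : W → ENNReal := fun w => ∫⁻ a, ((‖F (w, a)‖₊ : ENNReal)) ^ (2:ℝ) ∂κ with hAWdef
  set BA : A → ENNReal := fun a => ∫⁻ w, ((‖F (w, a)‖₊ : ENNReal)) ^ (2:ℝ) ∂μ with hBAdef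
  have hAWm : Measurable AW := by
    have h : Measurable (Function.uncurry fun w a => ((‖F (w,a)‖₊ : ENNReal)) ^ (2:ℝ)) := hnFm
    exact h.lintegral_prod_right
  have hBAm : Measurable BA := by
    have h : Measurable (Function.uncurry fun a w => ((‖F (w,a)‖₊ : ENNReal)) ^ (2:ℝ)) :=
      hnFm.comp measurable_swap
    exact h.lintegral_prod_right
  have hAW_int : ∫⁻ w, AW w ∂μ = ∫⁻ x, ((‖F x‖₊ : ENNReal))^(2:ℝ) ∂(μ.prod κ) :=
    (lintegral_prod _ hnFm.aemeasurable).symm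
  have hBA_int : ∫⁻ a, BA a ∂κ = ∫⁻ x, ((‖F x‖₊ : ENNReal))^(2:ℝ) ∂(μ.prod κ) :=
    (lintegral_prod_symm _ hnFm.aemeasurable).symm
  -- G is in L²
  have hG_slice : ∀ a, ((‖G a‖₊ : ENNReal)) ^ (2:ℝ)
      ≤ BA a * ∫⁻ w, ((‖E w‖₊ : ENNReal))^(2:ℝ) ∂μ := by
    intro a
    have h1 : ((‖G a‖₊ : ENNReal))
        ≤ ∫⁻ w, ((‖F (w,a)‖₊ : ENNReal)) * ((‖E w‖₊ : ENNReal)) ∂μ := by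
      refine (enorm_integral_le_lintegral_enorm _).trans_eq ?_
      refine lintegral_congr fun w => ?_
      rw [enorm_eq_nnnorm, nnnorm_mul, ENNReal.coe_mul]
    calc ((‖G a‖₊ : ENNReal)) ^ (2:ℝ)
        ≤ (∫⁻ w, ((‖F (w,a)‖₊ : ENNReal)) * ((‖E w‖₊ : ENNReal)) ∂μ) ^ (2:ℝ) :=
          ENNReal.rpow_le_rpow h1 (by norm_num)
      _ ≤ BA a * ∫⁻ w, ((‖E w‖₊ : ENNReal))^(2:ℝ) ∂μ :=
          lint_mul_sq_le μ
            ((hFm.comp (measurable_id.prodMk measurable_const)).nnnorm.coe_nnreal_ennreal).aemeasurable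
            (hEm.nnnorm.coe_nnreal_ennreal).aemeasurable
  have hG2_lt : (∫⁻ a, ((‖G a‖₊ : ENNReal)) ^ (2:ℝ) ∂κ) < ⊤ := by
    refine lt_of_le_of_lt (lintegral_mono hG_slice) ?_
    rw [lintegral_mul_const _ hBAm, hBA_int]
    exact ENNReal.mul_lt_top hIF_lt hIE_lt
  have hGL2 : MemLp G 2 κ := memLp_two_of hGm.aestronglyMeasurable hG2_lt
  -- rewrite the main integral
  have hEe2 : MemLp (fun x : W × A => E x.1 * e x.2) 2 (μ.prod κ) := by
    refine memLp_two_of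
      ((hEm.comp measurable_fst).mul (hem.comp measurable_snd)).aestronglyMeasurable ?_
    have hpt : ∀ x : W × A, ((‖E x.1 * e x.2‖₊ : ENNReal)) ^ (2:ℝ)
        = (fun w => ((‖E w‖₊ : ENNReal))^(2:ℝ)) x.1 * (fun a => ((‖e a‖₊ : ENNReal))^(2:ℝ)) x.2 := by
      intro x
      rw [nnnorm_mul, ENNReal.coe_mul, ENNReal.mul_rpow_of_nonneg _ _ (by norm_num : (0:ℝ) ≤ 2)]
    rw [lintegral_congr hpt, lintegral_prod_mul
      (hEm.nnnorm.coe_nnreal_ennreal.pow_const _).aemeasurable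
      (hem.nnnorm.coe_nnreal_ennreal.pow_const _).aemeasurable]
    exact ENNReal.mul_lt_top hIE_lt hIe_lt
  have hint : Integrable (fun x : W × A => F x * (E x.1 * e x.2)) (μ.prod κ) :=
    integrable_mul_L2 hF hEe2
  have h1 : ∫ x, F x * (E x.1 * e x.2) ∂(μ.prod κ) = ∫ a, e a * G a ∂κ := by
    rw [integral_prod_symm _ hint]
    refine integral_congr_ae (Filter.Eventually.of_forall fun a => ?_)
    show (∫ w, F (w, a) * (E w * e a) ∂μ) = e a * G a
    have hpt : ∀ w, F (w, a) * (E w * e a) = e a * (F (w, a) * E w) := fun w => by ring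
    rw [integral_congr_ae (Filter.Eventually.of_forall hpt), integral_const_mul]
  -- outer Hölder
  have h2 : ((‖∫ a, e a * G a ∂κ‖₊ : ENNReal))
      ≤ (∫⁻ a, ((‖e a‖₊ : ENNReal))^(2:ℝ) ∂κ) ^ (1/2:ℝ)
        * (∫⁻ a, ((‖G a‖₊ : ENNReal))^(2:ℝ) ∂κ) ^ (1/2:ℝ) := by
    refine le_trans (enorm_integral_le_lintegral_enorm _) ?_
    have hpt : ∀ a, ((‖e a * G a‖₊ : ENNReal))
        = ((‖e a‖₊ : ENNReal)) * ((‖G a‖₊ : ENNReal)) := fun a => by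
      rw [nnnorm_mul, ENNReal.coe_mul]
    refine le_trans (le_of_eq (lintegral_congr hpt)) ?_
    exact lint_mul_le κ (hem.nnnorm.coe_nnreal_ennreal).aemeasurable
      (hGm.nnnorm.coe_nnreal_ennreal).aemeasurable
  -- the big Fubini identity : ∫ G² = ∫ (E ⊗ E) C'
  have hbigm : Measurable fun x : A × (W × W) =>
      (F (x.2.1, x.1) * E x.2.1) * (F (x.2.2, x.1) * E x.2.2) :=
    ((hFm.comp ((measurable_fst.comp measurable_snd).prodMk measurable_fst)).mul
      (hEm.comp (measurable_fst.comp measurable_snd))).mul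
      ((hFm.comp ((measurable_snd.comp measurable_snd).prodMk measurable_fst)).mul
        (hEm.comp (measurable_snd.comp measurable_snd)))
  have hbig : Integrable (fun x : A × (W × W) =>
      (F (x.2.1, x.1) * E x.2.1) * (F (x.2.2, x.1) * E x.2.2)) (κ.prod (μ.prod μ)) := by
    refine ⟨hbigm.aestronglyMeasurable, hasFiniteIntegral_of ?_⟩
    rw [lintegral_prod _ hbigm.nnnorm.coe_nnreal_ennreal.aemeasurable]
    refine lt_of_le_of_lt (lintegral_mono fun a => ?_)
      (show (∫⁻ a, BA a * (∫⁻ w, ((‖E w‖₊ : ENNReal))^(2:ℝ) ∂μ) ∂κ) < ⊤ by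
        rw [lintegral_mul_const _ hBAm, hBA_int]
        exact ENNReal.mul_lt_top hIF_lt hIE_lt)
    exact lint_pair_bound μ (hFm.comp (measurable_id.prodMk measurable_const)) hEm
  have hGsq_int : ∫ a, G a ^ 2 ∂κ = ∫ wz : W × W, (E wz.1 * E wz.2) * C' wz ∂(μ.prod μ) := by
    have e1 : ∀ a, G a ^ 2
        = ∫ wz : W × W, (F (wz.1, a) * E wz.1) * (F (wz.2, a) * E wz.2) ∂(μ.prod μ) := by
      intro a
      rw [pow_two]
      exact (integral_prod_mul (fun w => F (w, a) * E w) (fun z => F (z, a) * E z)).symm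
    rw [integral_congr_ae (Filter.Eventually.of_forall e1), integral_integral_swap hbig]
    refine integral_congr_ae (Filter.Eventually.of_forall fun wz => ?_)
    show (∫ a, (F (wz.1, a) * E wz.1) * (F (wz.2, a) * E wz.2) ∂κ) = (E wz.1 * E wz.2) * C' wz
    have hpt : ∀ a, (F (wz.1, a) * E wz.1) * (F (wz.2, a) * E wz.2)
        = (E wz.1 * E wz.2) * (F (wz.1, a) * F (wz.2, a)) := fun a => by ring
    rw [integral_congr_ae (Filter.Eventually.of_forall hpt), integral_const_mul]
  -- C' is in L², with quantitative bound
  have hC'_slice : ∀ wz : W × W, ((‖C' wz‖₊ : ENNReal)) ^ (2:ℝ) ≤ AW wz.1 * AW wz.2 := by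
    intro wz
    have h1 : ((‖C' wz‖₊ : ENNReal))
        ≤ ∫⁻ a, ((‖F (wz.1, a)‖₊ : ENNReal)) * ((‖F (wz.2, a)‖₊ : ENNReal)) ∂κ := by
      refine (enorm_integral_le_lintegral_enorm _).trans_eq ?_
      refine lintegral_congr fun a => ?_
      rw [enorm_eq_nnnorm, nnnorm_mul, ENNReal.coe_mul]
    refine le_trans (ENNReal.rpow_le_rpow h1 (by norm_num)) ?_
    exact lint_mul_sq_le κ
      ((hFm.comp (measurable_const.prodMk measurable_id)).nnnorm.coe_nnreal_ennreal).aemeasurable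
      ((hFm.comp (measurable_const.prodMk measurable_id)).nnnorm.coe_nnreal_ennreal).aemeasurable
  have hC'2_lt : (∫⁻ wz : W × W, ((‖C' wz‖₊ : ENNReal)) ^ (2:ℝ) ∂(μ.prod μ)) < ⊤ := by
    refine lt_of_le_of_lt (lintegral_mono hC'_slice) ?_
    rw [lintegral_prod_mul hAWm.aemeasurable hAWm.aemeasurable, hAW_int]
    exact ENNReal.mul_lt_top hIF_lt hIF_lt
  have hC'L2 : MemLp C' 2 (μ.prod μ) := memLp_two_of hC'm.aestronglyMeasurable hC'2_lt
  -- C is in L²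
  have hC_slice : ∀ ab : A × A, ((‖C ab‖₊ : ENNReal)) ^ (2:ℝ) ≤ BA ab.1 * BA ab.2 := by
    intro ab
    have h1 : ((‖C ab‖₊ : ENNReal))
        ≤ ∫⁻ w, ((‖F (w, ab.1)‖₊ : ENNReal)) * ((‖F (w, ab.2)‖₊ : ENNReal)) ∂μ := by
      refine (enorm_integral_le_lintegral_enorm _).trans_eq ?_
      refine lintegral_congr fun w => ?_
      rw [enorm_eq_nnnorm, nnnorm_mul, ENNReal.coe_mul]
    refine le_trans (ENNReal.rpow_le_rpow h1 (by norm_num)) ?_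
    exact lint_mul_sq_le μ
      ((hFm.comp (measurable_id.prodMk measurable_const)).nnnorm.coe_nnreal_ennreal).aemeasurable
      ((hFm.comp (measurable_id.prodMk measurable_const)).nnnorm.coe_nnreal_ennreal).aemeasurable
  have hC2_lt : (∫⁻ ab : A × A, ((‖C ab‖₊ : ENNReal)) ^ (2:ℝ) ∂(κ.prod κ)) < ⊤ := by
    refine lt_of_le_of_lt (lintegral_mono hC_slice) ?_
    rw [lintegral_prod_mul hBAm.aemeasurable hBAm.aemeasurable, hBA_int]
    exact ENNReal.mul_lt_top hIF_lt hIF_lt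
  have hCL2 : MemLp C 2 (κ.prod κ) := memLp_two_of hCm.aestronglyMeasurable hC2_lt
  -- the exchange identity ∫ C'² = ∫ C²
  have hswapm : Measurable fun x : (W × W) × (A × A) =>
      (F (x.1.1, x.2.1) * F (x.1.2, x.2.1)) * (F (x.1.1, x.2.2) * F (x.1.2, x.2.2)) := by
    have m11 : Measurable fun x : (W × W) × (A × A) => (x.1.1, x.2.1) :=
      (measurable_fst.comp measurable_fst).prodMk (measurable_fst.comp measurable_snd)
    have m21 : Measurable fun x : (W × W) × (A × A) => (x.1.2, x.2.1) :=
      (measurable_snd.comp measurable_fst).prodMk (measurable_fst.comp measurable_snd)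
    have m12 : Measurable fun x : (W × W) × (A × A) => (x.1.1, x.2.2) :=
      (measurable_fst.comp measurable_fst).prodMk (measurable_snd.comp measurable_snd)
    have m22 : Measurable fun x : (W × W) × (A × A) => (x.1.2, x.2.2) :=
      (measurable_snd.comp measurable_fst).prodMk (measurable_snd.comp measurable_snd)
    exact ((hFm.comp m11).mul (hFm.comp m21)).mul ((hFm.comp m12).mul (hFm.comp m22))
  have hswap : Integrable (fun x : (W × W) × (A × A) =>
      (F (x.1.1, x.2.1) * F (x.1.2, x.2.1)) * (F (x.1.1, x.2.2) * F (x.1.2, x.2.2)))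
      ((μ.prod μ).prod (κ.prod κ)) := by
    refine ⟨hswapm.aestronglyMeasurable, hasFiniteIntegral_of ?_⟩
    rw [lintegral_prod _ hswapm.nnnorm.coe_nnreal_ennreal.aemeasurable]
    refine lt_of_le_of_lt (lintegral_mono fun wz => ?_)
      (show (∫⁻ wz : W × W, AW wz.1 * AW wz.2 ∂(μ.prod μ)) < ⊤ by
        rw [lintegral_prod_mul hAWm.aemeasurable hAWm.aemeasurable, hAW_int]
        exact ENNReal.mul_lt_top hIF_lt hIF_lt)
    exact lint_pair_bound κ (hFm.comp (measurable_const.prodMk measurable_id))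
      (hFm.comp (measurable_const.prodMk measurable_id))
  have hex : ∫ wz : W × W, C' wz ^ 2 ∂(μ.prod μ) = ∫ ab : A × A, C ab ^ 2 ∂(κ.prod κ) := by
    have l1 : ∀ wz : W × W, C' wz ^ 2 = ∫ ab : A × A,
        (F (wz.1, ab.1) * F (wz.2, ab.1)) * (F (wz.1, ab.2) * F (wz.2, ab.2)) ∂(κ.prod κ) := by
      intro wz
      rw [pow_two]
      exact (integral_prod_mul (fun a => F (wz.1, a) * F (wz.2, a))
        (fun b => F (wz.1, b) * F (wz.2, b))).symm
    have l2 : ∀ ab : A × A, C ab ^ 2 = ∫ wz : W × W,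
        (F (wz.1, ab.1) * F (wz.1, ab.2)) * (F (wz.2, ab.1) * F (wz.2, ab.2)) ∂(μ.prod μ) := by
      intro ab
      rw [pow_two]
      exact (integral_prod_mul (fun w => F (w, ab.1) * F (w, ab.2))
        (fun z => F (z, ab.1) * F (z, ab.2))).symm
    rw [integral_congr_ae (Filter.Eventually.of_forall l1),
      integral_congr_ae (Filter.Eventually.of_forall l2), integral_integral_swap hswap]
    refine integral_congr_ae (Filter.Eventually.of_forall fun ab => ?_)
    refine integral_congr_ae (Filter.Eventually.of_forall fun wz => ?_)
    show (F (wz.1, ab.1) * F (wz.2, ab.1)) * (F (wz.1, ab.2) * F (wz.2, ab.2))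
      = (F (wz.1, ab.1) * F (wz.1, ab.2)) * (F (wz.2, ab.1) * F (wz.2, ab.2))
    ring
  -- convert to lintegrals
  have hK4 : ∫⁻ wz : W × W, ((‖C' wz‖₊ : ENNReal)) ^ (2:ℝ) ∂(μ.prod μ)
      = ∫⁻ ab : A × A, ((‖C ab‖₊ : ENNReal)) ^ (2:ℝ) ∂(κ.prod κ) := by
    rw [lintegral_sq_eq_ofReal hC'L2, lintegral_sq_eq_ofReal hCL2, hex]
  -- bound ∫⁻ ‖G‖² by IE * (∫⁻ ‖C‖²) ^ (1/2)
  have hK3 : (∫⁻ a, ((‖G a‖₊ : ENNReal)) ^ (2:ℝ) ∂κ)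
      ≤ (∫⁻ w, ((‖E w‖₊ : ENNReal))^(2:ℝ) ∂μ)
        * (∫⁻ ab : A × A, ((‖C ab‖₊ : ENNReal)) ^ (2:ℝ) ∂(κ.prod κ)) ^ (1/2:ℝ) := by
    rw [lintegral_sq_eq_ofReal hGL2, hGsq_int, ← hK4]
    calc ENNReal.ofReal (∫ wz : W × W, (E wz.1 * E wz.2) * C' wz ∂(μ.prod μ))
        ≤ ((‖∫ wz : W × W, (E wz.1 * E wz.2) * C' wz ∂(μ.prod μ)‖₊ : ENNReal)) := coe_nnnorm_le
      _ ≤ ∫⁻ wz : W × W, ((‖(E wz.1 * E wz.2) * C' wz‖₊ : ENNReal)) ∂(μ.prod μ) :=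
          enorm_integral_le_lintegral_enorm _
      _ = ∫⁻ wz : W × W, ((‖E wz.1 * E wz.2‖₊ : ENNReal)) * ((‖C' wz‖₊ : ENNReal)) ∂(μ.prod μ) := by
          refine lintegral_congr fun wz => ?_
          rw [nnnorm_mul, ENNReal.coe_mul]
      _ ≤ (∫⁻ wz : W × W, ((‖E wz.1 * E wz.2‖₊ : ENNReal)) ^ (2:ℝ) ∂(μ.prod μ)) ^ (1/2:ℝ)
            * (∫⁻ wz : W × W, ((‖C' wz‖₊ : ENNReal)) ^ (2:ℝ) ∂(μ.prod μ)) ^ (1/2:ℝ) :=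
          lint_mul_le _
            (((hEm.comp measurable_fst).mul (hEm.comp measurable_snd)).nnnorm.coe_nnreal_ennreal).aemeasurable
            (hC'm.nnnorm.coe_nnreal_ennreal).aemeasurable
      _ ≤ _ := by
          refine mul_le_mul' ?_ le_rfl
          have hpt : ∀ wz : W × W, ((‖E wz.1 * E wz.2‖₊ : ENNReal)) ^ (2:ℝ)
              = (fun w => ((‖E w‖₊ : ENNReal))^(2:ℝ)) wz.1
                * (fun w => ((‖E w‖₊ : ENNReal))^(2:ℝ)) wz.2 := by
            intro wz
            rw [nnnorm_mul, ENNReal.coe_mul, ENNReal.mul_rpow_of_nonneg _ _ (by norm_num : (0:ℝ) ≤ 2)]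
          rw [lintegral_congr hpt, lintegral_prod_mul
            (hEm.nnnorm.coe_nnreal_ennreal.pow_const _).aemeasurable
            (hEm.nnnorm.coe_nnreal_ennreal.pow_const _).aemeasurable]
          refine le_of_eq ?_
          calc ((∫⁻ w, ((‖E w‖₊ : ENNReal))^(2:ℝ) ∂μ) * (∫⁻ w, ((‖E w‖₊ : ENNReal))^(2:ℝ) ∂μ)) ^ (1/2:ℝ)
              = (((∫⁻ w, ((‖E w‖₊ : ENNReal))^(2:ℝ) ∂μ)) ^ (2:ℝ)) ^ (1/2:ℝ) := by
                rw [ENNReal.rpow_two, pow_two]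
            _ = ∫⁻ w, ((‖E w‖₊ : ENNReal))^(2:ℝ) ∂μ := by
                rw [← ENNReal.rpow_mul]
                norm_num
  -- final assembly
  rw [h1, eLpNorm_two μ E, eLpNorm_two κ e, eLpNorm_two (κ.prod κ)]
  calc ((‖∫ a, e a * G a ∂κ‖₊ : ENNReal))
      ≤ (∫⁻ a, ((‖e a‖₊ : ENNReal))^(2:ℝ) ∂κ) ^ (1/2:ℝ)
        * (∫⁻ a, ((‖G a‖₊ : ENNReal))^(2:ℝ) ∂κ) ^ (1/2:ℝ) := h2
    _ ≤ (∫⁻ a, ((‖e a‖₊ : ENNReal))^(2:ℝ) ∂κ) ^ (1/2:ℝ)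
        * ((∫⁻ w, ((‖E w‖₊ : ENNReal))^(2:ℝ) ∂μ)
          * (∫⁻ ab : A × A, ((‖C ab‖₊ : ENNReal)) ^ (2:ℝ) ∂(κ.prod κ)) ^ (1/2:ℝ)) ^ (1/2:ℝ) :=
        mul_le_mul' le_rfl (ENNReal.rpow_le_rpow hK3 (by norm_num))
    _ = _ := by
        rw [ENNReal.mul_rpow_of_nonneg _ _ (by norm_num : (0:ℝ) ≤ 1/2)]
        ring

end Key

section ClaimC

open MeasureTheory

def widenIdx {n p : ℕ} (hpn : p = n + 1) (i : Fin n) : Fin p := ⟨i.val, by omega⟩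
def lastIdxP {n p : ℕ} (hpn : p = n + 1) : Fin p := ⟨n, by omega⟩

lemma prod_split_snoc {M : Type*} [CommMonoid M] {n p : ℕ} (hpn : p = n + 1) (φ : Fin p → M) :
    ∏ j : Fin p, φ j = (∏ i : Fin n, φ (widenIdx hpn i)) * φ (lastIdxP hpn) := by
  rw [← Equiv.prod_comp (finCongr hpn.symm) φ, Fin.prod_univ_castSucc]
  exact congrArg₂ (· * ·)
    (Finset.prod_congr rfl fun i _ => congrArg φ (by ext; simp [widenIdx]))
    (congrArg φ (by ext; simp [lastIdxP]))

variable {T : Type*} [MeasurableSpace T] (ν : Measure T) [SigmaFinite ν]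

lemma claimC {n p : ℕ} (hpn : p = n + 1)
    {f : (Fin p → T) → ℝ} (hfm : Measurable f) (hf : MemLp f 2 (Measure.pi fun _ : Fin p => ν))
    (e : Fin p → T → ℝ) (hem : ∀ j, Measurable (e j)) (he : ∀ j, MemLp (e j) 2 ν) :
    ((‖∫ u, f u * ∏ j, e j (u j) ∂(Measure.pi fun _ : Fin p => ν)‖₊ : ENNReal)) ≤
      (∏ j, eLpNorm (e j) 2 ν) *
        (eLpNorm (fun ab : T × T => ∫ w, f (finSnocEquiv hpn (w, ab.1))
            * f (finSnocEquiv hpn (w, ab.2)) ∂(Measure.pi fun _ : Fin n => ν))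
          2 (ν.prod ν)) ^ (1/2:ℝ) := by
  have hS := measurePreserving_finSnocEquiv ν hpn
  have hSm : Measurable (finSnocEquiv (T := T) hpn) := (finSnocEquiv hpn).measurable
  set E : (Fin n → T) → ℝ := fun w => ∏ i : Fin n, e (widenIdx hpn i) (w i) with hE
  have hEm' : Measurable E :=
    Finset.measurable_prod _ fun i _ => (hem _).comp (measurable_pi_apply i)
  have hEL2 : MemLp E 2 (Measure.pi fun _ : Fin n => ν) :=
    memLp_pi_prod ν _ (fun i => hem _) (fun i => he _)
  have hFS : MemLp (fun x : (Fin n → T) × T => f (finSnocEquiv hpn x)) 2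
      ((Measure.pi fun _ : Fin n => ν).prod ν) := memLp_comp_mp hS hfm hf
  have h0 : ∫ u, f u * ∏ j, e j (u j) ∂(Measure.pi fun _ : Fin p => ν)
      = ∫ x : (Fin n → T) × T, f (finSnocEquiv hpn x) * (E x.1 * e (lastIdxP hpn) x.2)
          ∂((Measure.pi fun _ : Fin n => ν).prod ν) := by
    rw [← hS.integral_comp (finSnocEquiv hpn).measurableEmbedding
      (fun u => f u * ∏ j, e j (u j))]
    refine integral_congr_ae (Filter.Eventually.of_forall fun x => ?_)
    obtain ⟨w, a⟩ := x
    show f (finSnocEquiv hpn (w, a)) * (∏ j, e j (finSnocEquiv hpn (w, a) j)) = _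
    congr 1
    rw [prod_split_snoc hpn (fun j => e j (finSnocEquiv hpn (w, a) j))]
    congr 1
    · refine Finset.prod_congr rfl fun i _ => ?_
      rw [finSnocEquiv_apply, dif_pos (show ((widenIdx hpn i : Fin p) : ℕ) < n from i.isLt)]
      exact congrArg _ (congrArg w (Fin.ext rfl))
    · rw [finSnocEquiv_apply, dif_neg (show ¬ ((lastIdxP hpn : Fin p) : ℕ) < n from lt_irrefl n)]
  rw [h0]
  have hkey := key_bound (hfm.comp hSm) hFS hEm' hEL2 (hem (lastIdxP hpn)) (he (lastIdxP hpn))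
  refine le_trans hkey (le_of_eq ?_)
  congr 1
  rw [hE, eLpNorm_pi_prod ν _ (fun i => hem _)]
  exact (prod_split_snoc hpn (fun j => eLpNorm (e j) 2 ν)).symm

set_option maxHeartbeats 1000000 in
lemma contraction_eq {n p : ℕ} (hpn : p = n + 1) (hn hn' : n ≤ p)
    {f : (Fin p → T) → ℝ} (hfm : Measurable f) :
    eLpNorm (contraction ν p p n hn hn' f f) 2 (Measure.pi fun _ => ν)
      = eLpNorm (fun ab : T × T => ∫ w, f (finSnocEquiv hpn (w, ab.1))
          * f (finSnocEquiv hpn (w, ab.2)) ∂(Measure.pi fun _ : Fin n => ν)) 2 (ν.prod ν) := by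
  have hd0 : (0:ℕ) < p + p - 2*n := by omega
  have hd1 : (1:ℕ) < p + p - 2*n := by omega
  have hd : p + p - 2*n = 2 := by omega
  have hSm : Measurable (finSnocEquiv (T := T) hpn) := (finSnocEquiv hpn).measurable
  have hCm : Measurable (fun ab : T × T => ∫ w, f (finSnocEquiv hpn (w, ab.1))
      * f (finSnocEquiv hpn (w, ab.2)) ∂(Measure.pi fun _ : Fin n => ν)) := by
    have hsm : StronglyMeasurable fun x : (T × T) × (Fin n → T) =>
        f (finSnocEquiv hpn (x.2, x.1.1)) * f (finSnocEquiv hpn (x.2, x.1.2)) :=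
      (((hfm.comp hSm).comp (measurable_snd.prodMk (measurable_fst.comp measurable_fst))).mul
        ((hfm.comp hSm).comp
          (measurable_snd.prodMk (measurable_snd.comp measurable_fst)))).stronglyMeasurable
    exact hsm.integral_prod_right'.measurable
  have hmp : MeasurePreserving (fun t : Fin (p+p-2*n) → T => (t ⟨0, hd0⟩, t ⟨1, hd1⟩))
      (Measure.pi fun _ : Fin (p+p-2*n) => ν) (ν.prod ν) := by
    have h2 := measurePreserving_piCongrLeft (fun _ : Fin 2 => ν) (finCongr hd)
    have h3 : MeasurePreserving (⇑(MeasurableEquiv.piFinSuccAbove (fun _ : Fin 2 => T) (0 : Fin 2)))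
        (Measure.pi fun _ : Fin 2 => ν) (ν.prod (Measure.pi fun _ : Fin 1 => ν)) :=
      measurePreserving_piFinSuccAbove (fun _ : Fin 2 => ν) 0
    have h4 : MeasurePreserving (Prod.map (id : T → T) (MeasurableEquiv.funUnique (Fin 1) T))
        (ν.prod (Measure.pi fun _ : Fin 1 => ν)) (ν.prod ν) :=
      (MeasurePreserving.id ν).prod (measurePreserving_funUnique ν (Fin 1))
    have hco : (fun t : Fin (p+p-2*n) → T => (t ⟨0, hd0⟩, t ⟨1, hd1⟩))
        = (Prod.map (id : T → T) (MeasurableEquiv.funUnique (Fin 1) T))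
          ∘ (⇑(MeasurableEquiv.piFinSuccAbove (fun _ : Fin 2 => T) (0 : Fin 2)))
          ∘ (⇑(MeasurableEquiv.piCongrLeft (fun _ : Fin 2 => T) (finCongr hd))) := by
      funext t
      have hE2 : ∀ j : Fin 2,
          (MeasurableEquiv.piCongrLeft (fun _ : Fin 2 => T) (finCongr hd)) t j
            = t ⟨(j : ℕ), by omega⟩ := by
        intro j
        rw [MeasurableEquiv.coe_piCongrLeft]
        have h3' : j = (finCongr hd) ((finCongr hd).symm j) := by simp
        conv_lhs => rw [h3']
        rw [Equiv.piCongrLeft_apply_apply]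
        exact congrArg t (by ext; simp)
      show (t ⟨0, hd0⟩, t ⟨1, hd1⟩) = _
      simp only [Function.comp_apply, MeasurableEquiv.piFinSuccAbove_apply,
        Fin.insertNthEquiv_symm_apply, Prod.map_apply, id_eq]
      refine Prod.ext ?_ ?_
      · show t ⟨0, hd0⟩ = _
        rw [hE2 0]
        exact congrArg t (Fin.ext (by simp))
      · show t ⟨1, hd1⟩ = (MeasurableEquiv.funUnique (Fin 1) T)
            (Fin.removeNth 0 ((MeasurableEquiv.piCongrLeft (fun _ : Fin 2 => T) (finCongr hd)) t))
        have h5 : (MeasurableEquiv.funUnique (Fin 1) T)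
            (Fin.removeNth 0 ((MeasurableEquiv.piCongrLeft (fun _ : Fin 2 => T) (finCongr hd)) t))
            = ((MeasurableEquiv.piCongrLeft (fun _ : Fin 2 => T) (finCongr hd)) t) 1 := rfl
        rw [h5, hE2 1]
        exact congrArg t (Fin.ext (by simp))
    rw [hco]
    exact h4.comp (h3.comp h2)
  have hfun : contraction ν p p n hn hn' f f
      = fun t : Fin (p+p-2*n) → T => (fun ab : T × T => ∫ w, f (finSnocEquiv hpn (w, ab.1))
          * f (finSnocEquiv hpn (w, ab.2)) ∂(Measure.pi fun _ : Fin n => ν))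
          ((fun t : Fin (p+p-2*n) → T => (t ⟨0, hd0⟩, t ⟨1, hd1⟩)) t) := by
    funext t
    show (∫ u, f (glueLeft p p n hn hn' u t) * f (glueRight p p n hn hn' u t)
      ∂(Measure.pi fun _ : Fin n => ν)) = _
    refine integral_congr_ae (Filter.Eventually.of_forall fun u => ?_)
    show f (glueLeft p p n hn hn' u t) * f (glueRight p p n hn hn' u t)
      = f (finSnocEquiv hpn (u, t ⟨0, hd0⟩)) * f (finSnocEquiv hpn (u, t ⟨1, hd1⟩))
    rw [glue_eq_snoc_left hpn hn hn' u t, glue_eq_snoc_right hpn hn hn' u t]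
  have hfin := eLpNorm_comp_mp hmp hCm
  have hcong := eLpNorm_congr_ae (p := 2)
    (μ := Measure.pi fun _ : Fin (p+p-2*n) => ν) (Filter.EventuallyEq.of_eq hfun)
  exact hcong.trans hfin

end ClaimC

section Main

open MeasureTheory

theorem stmt13_meas {T : Type*} [MeasurableSpace T] (ν : Measure T) [SigmaFinite ν]
    (p q : ℕ) (hp : 2 ≤ p) (hpq : p < q)
    (f : (Fin p → T) → ℝ) (hfm : Measurable f)
    (hf : MemLp f 2 (Measure.pi fun _ : Fin p => ν))
    (h : Fin q → T → ℝ) (hhm : ∀ j, Measurable (h j)) (hh : ∀ j, MemLp (h j) 2 ν) :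
    eLpNorm (contraction ν p q p (le_refl p) hpq.le f (symTensor q h)) 2
        (Measure.pi fun _ => ν)
      ≤ (∏ j : Fin q, eLpNorm (h j) 2 ν)
        * (eLpNorm
            (contraction ν p p (p - 1) (Nat.sub_le p 1) (Nat.sub_le p 1) f f) 2
            (Measure.pi fun _ => ν)) ^ ((1 : ℝ) / 2) := by
  classical
  have hpn : p = (p - 1) + 1 := by omega
  set B : Equiv.Perm (Fin q) → (Fin (p + q - 2*p) → T) → ℝ :=
    fun σ t => ∏ i : Fin (p + q - 2*p), h (σ (tailIdx hpq.le i)) (t i) with hB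
  set c : Equiv.Perm (Fin q) → ℝ :=
    fun σ => ∫ u, f u * ∏ j : Fin p, h (σ (Fin.castLE hpq.le j)) (u j)
      ∂(Measure.pi fun _ : Fin p => ν) with hc
  have tensorL2 : ∀ σ : Equiv.Perm (Fin q),
      MemLp (fun u : Fin p → T => ∏ j : Fin p, h (σ (Fin.castLE hpq.le j)) (u j))
        2 (Measure.pi fun _ : Fin p => ν) :=
    fun σ => memLp_pi_prod ν _ (fun j => hhm _) (fun j => hh _)
  -- Step A : rewrite the contraction as a finite sum of elementary pieces
  have hA : contraction ν p q p (le_refl p) hpq.le f (symTensor q h)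
      = (q.factorial : ℝ)⁻¹ • ∑ σ : Equiv.Perm (Fin q), (fun t => c σ * B σ t) := by
    funext t
    have hgl : ∀ u : Fin p → T, glueLeft p q p (le_refl p) hpq.le u t = u := by
      intro u; funext i
      simp [glueLeft, i.isLt]
    have hgr : ∀ (u : Fin p → T) (σ : Equiv.Perm (Fin q)),
        (∏ j : Fin q, h (σ j) (glueRight p q p (le_refl p) hpq.le u t j))
          = (∏ j : Fin p, h (σ (Fin.castLE hpq.le j)) (u j)) * B σ t := by
      intro u σ
      rw [prod_split hpq.le (fun j => h (σ j) (glueRight p q p (le_refl p) hpq.le u t j))]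
      refine congrArg₂ (· * ·) ?_ ?_
      · refine Finset.prod_congr rfl fun j _ => ?_
        have hlt : ((Fin.castLE hpq.le j : Fin q) : ℕ) < p := j.isLt
        have hv : glueRight p q p (le_refl p) hpq.le u t (Fin.castLE hpq.le j) = u j := by
          simp [glueRight, hlt]
        rw [hv]
      · refine Finset.prod_congr rfl fun i _ => ?_
        have h1 : ¬ ((tailIdx hpq.le i : Fin q) : ℕ) < p := by simp [tailIdx]
        have hv : glueRight p q p (le_refl p) hpq.le u t (tailIdx hpq.le i) = t i := by
          simp only [glueRight]
          rw [dif_neg h1]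
          exact congrArg t (Fin.ext (by simp [tailIdx]))
        rw [hv]
    show (∫ u, f (glueLeft p q p (le_refl p) hpq.le u t)
        * symTensor q h (glueRight p q p (le_refl p) hpq.le u t)
        ∂(Measure.pi fun _ : Fin p => ν)) = _
    calc (∫ u, f (glueLeft p q p (le_refl p) hpq.le u t)
        * symTensor q h (glueRight p q p (le_refl p) hpq.le u t)
        ∂(Measure.pi fun _ : Fin p => ν))
        = ∫ u, ∑ σ : Equiv.Perm (Fin q), ((q.factorial : ℝ)⁻¹ * B σ t)
            * (f u * ∏ j : Fin p, h (σ (Fin.castLE hpq.le j)) (u j))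
            ∂(Measure.pi fun _ : Fin p => ν) := by
          refine integral_congr_ae (Filter.Eventually.of_forall fun u => ?_)
          show f (glueLeft p q p (le_refl p) hpq.le u t)
            * symTensor q h (glueRight p q p (le_refl p) hpq.le u t) = _
          rw [hgl u]
          show f u * ((q.factorial : ℝ)⁻¹ * ∑ σ : Equiv.Perm (Fin q),
            ∏ j : Fin q, h (σ j) (glueRight p q p (le_refl p) hpq.le u t j)) = _
          rw [Finset.sum_congr rfl fun σ _ => hgr u σ, Finset.mul_sum, Finset.mul_sum]
          exact Finset.sum_congr rfl fun σ _ => by ring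
      _ = ∑ σ : Equiv.Perm (Fin q), ((q.factorial : ℝ)⁻¹ * B σ t) * c σ := by
          rw [integral_finset_sum _
            (fun σ _ => ((integrable_mul_L2 hf (tensorL2 σ)).const_mul _))]
          exact Finset.sum_congr rfl fun σ _ => integral_const_mul _ _
      _ = ((q.factorial : ℝ)⁻¹ • ∑ σ : Equiv.Perm (Fin q), (fun t' => c σ * B σ t')) t := by
          rw [Pi.smul_apply, Finset.sum_apply, smul_eq_mul, Finset.mul_sum]
          exact Finset.sum_congr rfl fun σ _ => by ring
  rw [hA, eLpNorm_const_smul]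
  set K := (eLpNorm (contraction ν p p (p - 1) (Nat.sub_le p 1) (Nat.sub_le p 1) f f) 2
    (Measure.pi fun _ => ν)) ^ ((1:ℝ)/2) with hK
  have hBm : ∀ σ, Measurable (B σ) := by
    rw [hB]
    exact fun σ => Finset.measurable_prod _ fun i _ => (hhm _).comp (measurable_pi_apply i)
  have hsum := eLpNorm_sum_le
    (μ := Measure.pi fun _ : Fin (p + q - 2*p) => ν)
    (f := fun σ (t : Fin (p + q - 2*p) → T) => c σ * B σ t) (s := Finset.univ)
    (fun σ _ => (measurable_const.mul (hBm σ)).aestronglyMeasurable) one_le_two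
  have hterm : ∀ σ : Equiv.Perm (Fin q),
      eLpNorm (fun t => c σ * B σ t) 2 (Measure.pi fun _ : Fin (p + q - 2*p) => ν)
        = ((‖c σ‖₊ : ENNReal))
          * ∏ i : Fin (p + q - 2*p), eLpNorm (h (σ (tailIdx hpq.le i))) 2 ν := by
    intro σ
    have h1 : (fun t : Fin (p + q - 2*p) → T => c σ * B σ t) = (c σ) • (B σ) := rfl
    rw [h1, eLpNorm_const_smul]
    congr 1
    rw [hB]
    exact eLpNorm_pi_prod ν _ (fun i => hhm _)
  have hcb : ∀ σ : Equiv.Perm (Fin q), ((‖c σ‖₊ : ENNReal))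
      ≤ (∏ j : Fin p, eLpNorm (h (σ (Fin.castLE hpq.le j))) 2 ν) * K := by
    intro σ
    rw [hK, contraction_eq ν hpn (Nat.sub_le p 1) (Nat.sub_le p 1) hfm, hc]
    exact claimC ν hpn hfm hf (fun j => h (σ (Fin.castLE hpq.le j))) (fun j => hhm _)
      (fun j => hh _)
  calc ((‖((q.factorial : ℝ))⁻¹‖₊ : ENNReal))
        * eLpNorm (∑ σ : Equiv.Perm (Fin q), fun t => c σ * B σ t) 2 (Measure.pi fun _ => ν)
      ≤ ((‖((q.factorial : ℝ))⁻¹‖₊ : ENNReal)) * ∑ σ : Equiv.Perm (Fin q),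
          (((‖c σ‖₊ : ENNReal))
            * ∏ i : Fin (p + q - 2*p), eLpNorm (h (σ (tailIdx hpq.le i))) 2 ν) :=
        mul_le_mul' le_rfl (hsum.trans (le_of_eq (Finset.sum_congr rfl fun σ _ => hterm σ)))
    _ ≤ ((‖((q.factorial : ℝ))⁻¹‖₊ : ENNReal)) * ∑ σ : Equiv.Perm (Fin q),
          (((∏ j : Fin p, eLpNorm (h (σ (Fin.castLE hpq.le j))) 2 ν) * K)
            * ∏ i : Fin (p + q - 2*p), eLpNorm (h (σ (tailIdx hpq.le i))) 2 ν) :=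
        mul_le_mul' le_rfl (Finset.sum_le_sum fun σ _ => mul_le_mul' (hcb σ) le_rfl)
    _ = ((‖((q.factorial : ℝ))⁻¹‖₊ : ENNReal)) * ∑ σ : Equiv.Perm (Fin q),
          ((∏ j : Fin q, eLpNorm (h (σ j)) 2 ν) * K) := by
        refine congrArg _ (Finset.sum_congr rfl fun σ _ => ?_)
        rw [prod_split hpq.le (fun j => eLpNorm (h (σ j)) 2 ν)]
        ring
    _ = ((‖((q.factorial : ℝ))⁻¹‖₊ : ENNReal))
        * ((q.factorial : ENNReal) * ((∏ j : Fin q, eLpNorm (h j) 2 ν) * K)) := by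
        refine congrArg _ ?_
        have h1 : (∑ σ : Equiv.Perm (Fin q), ((∏ j : Fin q, eLpNorm (h (σ j)) 2 ν) * K))
            = ∑ _σ : Equiv.Perm (Fin q), ((∏ j : Fin q, eLpNorm (h j) 2 ν) * K) :=
          Finset.sum_congr rfl fun σ _ => by rw [Equiv.prod_comp σ (fun j => eLpNorm (h j) 2 ν)]
        rw [h1, Finset.sum_const, Finset.card_univ, Fintype.card_perm, Fintype.card_fin,
          nsmul_eq_mul]
    _ = (∏ j : Fin q, eLpNorm (h j) 2 ν) * K := by
        have h1 : ((‖((q.factorial : ℝ))⁻¹‖₊ : ENNReal)) = ((q.factorial : ENNReal))⁻¹ := by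
          rw [nnnorm_inv, ENNReal.coe_inv (by
            simp [Nat.factorial_ne_zero, nnnorm_eq_zero] : ‖((q.factorial : ℝ))‖₊ ≠ 0)]
          congr 1
          simp
        rw [h1, ← mul_assoc, ENNReal.inv_mul_cancel (by
            exact_mod_cast (Nat.factorial_pos q).ne') (ENNReal.natCast_ne_top _), one_mul]

end Main

/-- For `2 ≤ p < q`, `f ∈ L²(ν^{⊗p})` symmetric and `h₁,…,h_q ∈ L²(ν)`,
`‖f ⊗_p (h₁ ⊗̃ ⋯ ⊗̃ h_q)‖_{L²(T^{q−p})} ≤ (∏_j ‖h_j‖_{L²(T)}) ⬝ √(‖f ⊗_{p−1} f‖_{L²(T²)})`. -/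
theorem stmt13 {T : Type*} [MeasurableSpace T] (ν : Measure T) [SigmaFinite ν]
    (p q : ℕ) (hp : 2 ≤ p) (hpq : p < q)
    (f : (Fin p → T) → ℝ)
    (hf : MemLp f 2 (Measure.pi fun _ : Fin p => ν))
    (hfs : AESymmetric ν f)
    (h : Fin q → T → ℝ)
    (hh : ∀ j, MemLp (h j) 2 ν) :
    eLpNorm (contraction ν p q p (le_refl p) hpq.le f (symTensor q h)) 2
        (Measure.pi fun _ => ν)
      ≤ (∏ j : Fin q, eLpNorm (h j) 2 ν)
        * (eLpNorm
            (contraction ν p p (p - 1) (Nat.sub_le p 1) (Nat.sub_le p 1) f f) 2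
            (Measure.pi fun _ => ν)) ^ ((1 : ℝ) / 2) := by
  classical
  obtain ⟨f₀, hf₀m, hff₀⟩ := hf.1
  choose h₀ hh₀m hhh₀ using fun j => (hh j).1
  have hf₀ : MemLp f₀ 2 (Measure.pi fun _ : Fin p => ν) := hf.ae_eq hff₀
  have hh₀ : ∀ j, MemLp (h₀ j) 2 ν := fun j => (hh j).ae_eq (hhh₀ j)
  set N : Fin q → Set T := fun j => toMeasurable ν {x | h j x ≠ h₀ j x} with hN
  have hNnull : ∀ j, ν (N j) = 0 := by
    intro j
    simp only [hN]
    rw [measure_toMeasurable]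
    exact ae_iff.1 (hhh₀ j)
  have hNx : ∀ j x, x ∉ N j → h j x = h₀ j x := by
    intro j x hx
    by_contra hne
    exact hx (by simp only [hN]; exact subset_toMeasurable ν _ hne)
  have hNf : ∀ j, ∀ᵐ x ∂ν, x ∉ N j := by
    intro j
    rw [ae_iff]
    simpa using hNnull j
  -- bridge for the left-hand side
  have hL : eLpNorm (contraction ν p q p (le_refl p) hpq.le f (symTensor q h)) 2
        (Measure.pi fun _ => ν)
      = eLpNorm (contraction ν p q p (le_refl p) hpq.le f₀ (symTensor q h₀)) 2
        (Measure.pi fun _ => ν) := by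
    refine eLpNorm_congr_ae ?_
    have hgt : ∀ᵐ t ∂(Measure.pi fun _ : Fin (p + q - 2*p) => ν),
        ∀ i : Fin (p + q - 2*p), ∀ j : Fin q, t i ∉ N j :=
      ae_all_iff.2 fun i => ae_all_iff.2 fun j => ae_eval ν i (hNf j)
    have hgu : ∀ᵐ u ∂(Measure.pi fun _ : Fin p => ν),
        f u = f₀ u ∧ ∀ k : Fin p, ∀ j : Fin q, u k ∉ N j :=
      hff₀.and (ae_all_iff.2 fun k => ae_all_iff.2 fun j => ae_eval ν k (hNf j))
    filter_upwards [hgt] with t ht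
    show contraction ν p q p (le_refl p) hpq.le f (symTensor q h) t
      = contraction ν p q p (le_refl p) hpq.le f₀ (symTensor q h₀) t
    refine integral_congr_ae ?_
    filter_upwards [hgu] with u hu
    show f (glueLeft p q p (le_refl p) hpq.le u t)
        * symTensor q h (glueRight p q p (le_refl p) hpq.le u t)
      = f₀ (glueLeft p q p (le_refl p) hpq.le u t)
        * symTensor q h₀ (glueRight p q p (le_refl p) hpq.le u t)
    have hglu : glueLeft p q p (le_refl p) hpq.le u t = u := by
      funext i; simp [glueLeft, i.isLt]
    rw [hglu]
    refine congrArg₂ (· * ·) hu.1 ?_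
    show (q.factorial : ℝ)⁻¹ * ∑ σ : Equiv.Perm (Fin q),
        ∏ j, h (σ j) (glueRight p q p (le_refl p) hpq.le u t j)
      = (q.factorial : ℝ)⁻¹ * ∑ σ : Equiv.Perm (Fin q),
        ∏ j, h₀ (σ j) (glueRight p q p (le_refl p) hpq.le u t j)
    refine congrArg _ (Finset.sum_congr rfl fun σ _ => Finset.prod_congr rfl fun j _ => ?_)
    by_cases hj : ((j : Fin q) : ℕ) < p
    · have hv : glueRight p q p (le_refl p) hpq.le u t j = u ⟨(j : ℕ), hj⟩ := by
        simp [glueRight, hj]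
      rw [hv]
      exact hNx (σ j) _ (hu.2 ⟨(j : ℕ), hj⟩ (σ j))
    · have hv : glueRight p q p (le_refl p) hpq.le u t j
          = t ⟨(p - p) + ((j : ℕ) - p), by have := j.isLt; omega⟩ := by
        simp [glueRight, hj]
      rw [hv]
      exact hNx (σ j) _ (ht _ (σ j))
  -- bridge for the h-norms
  have hR1 : (∏ j : Fin q, eLpNorm (h j) 2 ν) = ∏ j : Fin q, eLpNorm (h₀ j) 2 ν :=
    Finset.prod_congr rfl fun j _ => eLpNorm_congr_ae (hhh₀ j)
  -- bridge for the contraction of f with itself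
  have hpn : p = (p - 1) + 1 := by omega
  have hR2 : eLpNorm (contraction ν p p (p - 1) (Nat.sub_le p 1) (Nat.sub_le p 1) f f) 2
        (Measure.pi fun _ => ν)
      = eLpNorm (contraction ν p p (p - 1) (Nat.sub_le p 1) (Nat.sub_le p 1) f₀ f₀) 2
        (Measure.pi fun _ => ν) := by
    refine eLpNorm_congr_ae ?_
    set Nf := toMeasurable (Measure.pi fun _ : Fin p => ν) {v | f v ≠ f₀ v} with hNfdef
    have hNfm : MeasurableSet Nf := measurableSet_toMeasurable _ _
    have hNf0 : (Measure.pi fun _ : Fin p => ν) Nf = 0 := by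
      simp only [hNfdef]
      rw [measure_toMeasurable]
      exact ae_iff.1 hff₀
    have hfx : ∀ v, v ∉ Nf → f v = f₀ v := by
      intro v hv
      by_contra hne
      exact hv (by simp only [hNfdef]; exact subset_toMeasurable _ _ hne)
    have hS := measurePreserving_finSnocEquiv ν hpn
    have hpre : ((Measure.pi fun _ : Fin (p-1) => ν).prod ν)
        ((finSnocEquiv hpn) ⁻¹' Nf) = 0 := by
      rw [hS.measure_preimage hNfm.nullMeasurableSet]
      exact hNf0
    have hswap' : (ν.prod (Measure.pi fun _ : Fin (p-1) => ν))
        (Prod.swap ⁻¹' ((finSnocEquiv hpn) ⁻¹' Nf)) = 0 := by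
      rw [Measure.measurePreserving_swap.measure_preimage
        ((hNfm.preimage (finSnocEquiv hpn).measurable).nullMeasurableSet)]
      exact hpre
    have hsec : ∀ᵐ a ∂ν, (Measure.pi fun _ : Fin (p-1) => ν)
        {w : Fin (p-1) → T | finSnocEquiv hpn (w, a) ∈ Nf} = 0 := by
      have hms : MeasurableSet (Prod.swap ⁻¹' ((finSnocEquiv hpn) ⁻¹' Nf)) :=
        (hNfm.preimage (finSnocEquiv hpn).measurable).preimage measurable_swap
      have hall := (Measure.measure_prod_null (μ := ν)
        (ν := Measure.pi fun _ : Fin (p-1) => ν) hms).1 hswap'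
      filter_upwards [hall] with a ha
      exact ha
    have hgt : ∀ᵐ t ∂(Measure.pi fun _ : Fin (p + p - 2*(p-1)) => ν),
        ((Measure.pi fun _ : Fin (p-1) => ν)
          {w : Fin (p-1) → T | finSnocEquiv hpn (w, t ⟨0, by omega⟩) ∈ Nf} = 0)
        ∧ ((Measure.pi fun _ : Fin (p-1) => ν)
          {w : Fin (p-1) → T | finSnocEquiv hpn (w, t ⟨1, by omega⟩) ∈ Nf} = 0) :=
      (ae_eval ν _ hsec).and (ae_eval ν _ hsec)
    filter_upwards [hgt] with t ht
    show contraction ν p p (p-1) (Nat.sub_le p 1) (Nat.sub_le p 1) f f t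
      = contraction ν p p (p-1) (Nat.sub_le p 1) (Nat.sub_le p 1) f₀ f₀ t
    refine integral_congr_ae ?_
    have hu0 : ∀ᵐ u ∂(Measure.pi fun _ : Fin (p-1) => ν),
        finSnocEquiv hpn (u, t ⟨0, by omega⟩) ∉ Nf := by
      rw [ae_iff]
      simpa using ht.1
    have hu1 : ∀ᵐ u ∂(Measure.pi fun _ : Fin (p-1) => ν),
        finSnocEquiv hpn (u, t ⟨1, by omega⟩) ∉ Nf := by
      rw [ae_iff]
      simpa using ht.2
    filter_upwards [hu0, hu1] with u h0 h1
    show f (glueLeft p p (p-1) (Nat.sub_le p 1) (Nat.sub_le p 1) u t)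
        * f (glueRight p p (p-1) (Nat.sub_le p 1) (Nat.sub_le p 1) u t)
      = f₀ (glueLeft p p (p-1) (Nat.sub_le p 1) (Nat.sub_le p 1) u t)
        * f₀ (glueRight p p (p-1) (Nat.sub_le p 1) (Nat.sub_le p 1) u t)
    rw [glue_eq_snoc_left hpn (Nat.sub_le p 1) (Nat.sub_le p 1) u t,
      glue_eq_snoc_right hpn (Nat.sub_le p 1) (Nat.sub_le p 1) u t,
      hfx _ h0, hfx _ h1]
  rw [hL, hR1, hR2]
  exact stmt13_meas ν p q hp hpq f₀ hf₀m.measurable hf₀ h₀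
    (fun j => (hh₀m j).measurable) hh₀
end

section
/- Let p ≥ 1 be an integer, let H₀ ∈ (0, 1 − 1/(2p)) and H₁ ∈ (1 − 1/(2p), 1), and set H̄ = (H₀ + H₁)/2. Then N^{p(1−H₁)−3/2} · Σ_{k,l=0}^{N−1} ρ_{H̄}(k−l)^p → 0 as N → ∞. -/
open Filter Topology

/-- The autocovariance function of fractional Gaussian noise with Hurst index `H`:
`ρ_H(v) = ½(|v+1|^{2H} + |v−1|^{2H} − 2|v|^{2H})`. -/
noncomputable def rhoFGN (H : ℝ) (v : ℤ) : ℝ :=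
  (|(v : ℝ) + 1| ^ (2 * H) + |(v : ℝ) - 1| ^ (2 * H) - 2 * |(v : ℝ)| ^ (2 * H)) / 2

lemma aux_rpow_lip {a r : ℝ} (ha : 0 < a) (hr : r ≤ 1) {b c : ℝ} (hb : a ≤ b) (hc : a ≤ c) :
    |b ^ r - c ^ r| ≤ |r| * a ^ (r - 1) * |b - c| := by
  have h := Convex.norm_image_sub_le_of_norm_hasDerivWithin_le
    (f := fun x : ℝ => x ^ r) (f' := fun x : ℝ => r * x ^ (r - 1)) (s := Set.Ici a)
    (fun x hx => (Real.hasDerivAt_rpow_const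
      (Or.inl (ne_of_gt (lt_of_lt_of_le ha hx)))).hasDerivWithinAt)
    (fun x hx => by
      have hx' : (0:ℝ) < x := lt_of_lt_of_le ha hx
      have h1 : x ^ (r - 1) ≤ a ^ (r - 1) :=
        Real.rpow_le_rpow_of_nonpos ha hx (by linarith)
      have h2 : ‖r * x ^ (r - 1)‖ = |r| * x ^ (r - 1) := by
        rw [norm_mul, Real.norm_eq_abs, Real.norm_eq_abs,
          abs_of_nonneg (Real.rpow_nonneg hx'.le _)]
      rw [h2]
      exact mul_le_mul_of_nonneg_left h1 (abs_nonneg r))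
    (convex_Ici a) hc hb
  simpa [Real.norm_eq_abs] using h

lemma aux_second_diff {H x : ℝ} (hH0 : 0 < H) (hH1 : H < 1) (hx : 2 ≤ x) :
    |(x + 1) ^ (2 * H) + (x - 1) ^ (2 * H) - 2 * x ^ (2 * H)| ≤
      4 * (x - 1) ^ (2 * H - 2) := by
  have hx1 : (1:ℝ) ≤ x - 1 := by linarith
  have hx1' : (0:ℝ) < x - 1 := by linarith
  set s : ℝ := 2 * H with hs
  set g : ℝ → ℝ := fun t => (x + t) ^ s + (x - t) ^ s with hg
  have hderiv : ∀ t ∈ Set.Icc (0:ℝ) 1,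
      HasDerivWithinAt g (s * (x + t) ^ (s - 1) - s * (x - t) ^ (s - 1))
        (Set.Icc (0:ℝ) 1) t := by
    intro t ht
    have h1 : HasDerivAt (fun t : ℝ => (x + t) ^ s) (s * (x + t) ^ (s - 1)) t := by
      have := (Real.hasDerivAt_rpow_const
        (x := x + t) (p := s) (Or.inl (by nlinarith [ht.1, ht.2]))).comp t
        ((hasDerivAt_const t x).add (hasDerivAt_id t))
      simpa [Function.comp_def] using this
    have h2 : HasDerivAt (fun t : ℝ => (x - t) ^ s) (-(s * (x - t) ^ (s - 1))) t := by
      have := (Real.hasDerivAt_rpow_const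
        (x := x - t) (p := s) (Or.inl (by nlinarith [ht.1, ht.2]))).comp t
        ((hasDerivAt_const t x).sub (hasDerivAt_id t))
      simpa [Function.comp_def] using this
    have := (h1.add h2).hasDerivWithinAt (s := Set.Icc (0:ℝ) 1)
    rw [sub_eq_add_neg (s * (x + t) ^ (s - 1))]; exact this
  have hbound : ∀ t ∈ Set.Icc (0:ℝ) 1,
      ‖s * (x + t) ^ (s - 1) - s * (x - t) ^ (s - 1)‖ ≤ 4 * (x - 1) ^ (s - 2) := by
    intro t ht
    have hxt1 : x - 1 ≤ x + t := by linarith [ht.1]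
    have hxt2 : x - 1 ≤ x - t := by linarith [ht.2]
    have key : |(x + t) ^ (s - 1) - (x - t) ^ (s - 1)| ≤
        |s - 1| * (x - 1) ^ (s - 1 - 1) * |(x + t) - (x - t)| :=
      aux_rpow_lip hx1' (by rw [hs]; linarith) hxt1 hxt2
    have h2t : |(x + t) - (x - t)| = 2 * t := by
      rw [abs_of_nonneg] <;> [ring_nf; linarith [ht.1]]
    have hs1 : |s - 1| ≤ 1 := by
      rw [abs_le, hs]; constructor <;> linarith
    have hP : (0:ℝ) ≤ (x - 1) ^ (s - 2) := Real.rpow_nonneg hx1'.le _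
    have hD := abs_nonneg ((x + t) ^ (s - 1) - (x - t) ^ (s - 1))
    have hkey2 : |(x + t) ^ (s - 1) - (x - t) ^ (s - 1)| ≤ 2 * (x - 1) ^ (s - 2) := by
      have e : s - 1 - 1 = s - 2 := by ring
      rw [e, h2t] at key
      have h2tn : (0:ℝ) ≤ 2 * t := by linarith [ht.1]
      have h1 : |s - 1| * (x - 1) ^ (s - 2) ≤ (x - 1) ^ (s - 2) :=
        mul_le_of_le_one_left hP hs1
      have h2 : |s - 1| * (x - 1) ^ (s - 2) * (2 * t) ≤ (x - 1) ^ (s - 2) * (2 * t) :=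
        mul_le_mul_of_nonneg_right h1 h2tn
      have h3 : (x - 1) ^ (s - 2) * (2 * t) ≤ (x - 1) ^ (s - 2) * 2 :=
        mul_le_mul_of_nonneg_left (by linarith [ht.2]) hP
      linarith
    have hnorm : ‖s * (x + t) ^ (s - 1) - s * (x - t) ^ (s - 1)‖ =
        s * |(x + t) ^ (s - 1) - (x - t) ^ (s - 1)| := by
      rw [← mul_sub, Real.norm_eq_abs, abs_mul, abs_of_nonneg (by positivity)]
    rw [hnorm]
    have hs2 : s ≤ 2 := by rw [hs]; linarith
    have := mul_le_mul hs2 hkey2 hD (by norm_num : (0:ℝ) ≤ 2)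
    linarith
  have := Convex.norm_image_sub_le_of_norm_hasDerivWithin_le hderiv hbound
    (convex_Icc 0 1) (Set.left_mem_Icc.2 zero_le_one) (Set.right_mem_Icc.2 zero_le_one)
  have hg1 : g 1 - g 0 = (x + 1) ^ s + (x - 1) ^ s - 2 * x ^ s := by
    simp [hg]; ring
  rw [Real.norm_eq_abs, hg1] at this
  simpa using this

lemma rho_nat_bound {H : ℝ} (hH0 : 0 < H) (hH1 : H < 1) {v : ℕ} (hv : 1 ≤ v) :
    |rhoFGN H (v : ℤ)| ≤ 8 * (v : ℝ) ^ (2 * H - 2) := by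
  have hx : (1:ℝ) ≤ (v:ℝ) := by exact_mod_cast hv
  have hval : rhoFGN H (v:ℤ) =
      (((v:ℝ)+1)^(2*H) + ((v:ℝ)-1)^(2*H) - 2*(v:ℝ)^(2*H))/2 := by
    rw [rhoFGN]
    push_cast
    rw [abs_of_nonneg (by linarith : (0:ℝ) ≤ (v:ℝ) + 1),
      abs_of_nonneg (by linarith : (0:ℝ) ≤ (v:ℝ) - 1),
      abs_of_nonneg (by linarith : (0:ℝ) ≤ (v:ℝ))]
  rw [hval, abs_div, abs_two]
  rcases eq_or_lt_of_le hv with h1 | h2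
  · -- v = 1
    have : (v:ℝ) = 1 := by exact_mod_cast h1.symm
    rw [this]
    have e0 : ((1:ℝ) - 1) = 0 := by norm_num
    have e2 : ((1:ℝ) + 1) = 2 := by norm_num
    rw [e0, e2, Real.zero_rpow (by positivity : (2*H) ≠ 0), Real.one_rpow, Real.one_rpow]
    have e4 : (2:ℝ) ^ (2:ℝ) = 4 := by
      rw [show (2:ℝ) = ((2:ℕ):ℝ) from by norm_num, Real.rpow_natCast]; norm_num
    have h4 : (2:ℝ) ^ (2*H) ≤ 4 := by
      have h := Real.rpow_le_rpow_of_exponent_le (x := 2) one_le_two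
        (by linarith : 2*H ≤ (2:ℝ))
      rw [e4] at h; exact h
    have h0 : (0:ℝ) ≤ (2:ℝ) ^ (2*H) := Real.rpow_nonneg (by norm_num) _
    have habs : |(2:ℝ)^(2*H) + 0 - 2*1| ≤ 2 := abs_le.mpr ⟨by linarith, by linarith⟩
    norm_num at habs ⊢
    linarith
  · -- 2 ≤ v
    have hx2 : (2:ℝ) ≤ (v:ℝ) := by exact_mod_cast h2
    have key := aux_second_diff hH0 hH1 hx2
    have hstep : ((v:ℝ) - 1) ^ (2*H - 2) ≤ 4 * (v:ℝ) ^ (2*H - 2) := by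
      have h1 : ((v:ℝ) - 1) ^ (2*H-2) ≤ ((v:ℝ)/2) ^ (2*H-2) :=
        Real.rpow_le_rpow_of_nonpos (by linarith) (by linarith) (by linarith)
      have h2' : ((v:ℝ)/2) ^ (2*H-2) = (v:ℝ)^(2*H-2) / (2:ℝ)^(2*H-2) :=
        Real.div_rpow (by linarith) (by norm_num) _
      have h3 : (1/4 : ℝ) ≤ (2:ℝ)^(2*H-2) := by
        have h := Real.rpow_le_rpow_of_exponent_le (x := 2) one_le_two
          (by linarith : (-2:ℝ) ≤ 2*H-2)
        have e : (2:ℝ) ^ (-2:ℝ) = 1/4 := by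
          rw [Real.rpow_neg (by norm_num : (0:ℝ) ≤ 2),
            show (2:ℝ) = ((2:ℕ):ℝ) from by norm_num, Real.rpow_natCast]
          norm_num
        rw [e] at h; exact h
      have h4 : (v:ℝ)^(2*H-2) / (2:ℝ)^(2*H-2) ≤ 4 * (v:ℝ)^(2*H-2) := by
        rw [div_le_iff₀ (by positivity : (0:ℝ) < (2:ℝ)^(2*H-2))]
        nlinarith [Real.rpow_nonneg (by linarith : (0:ℝ) ≤ (v:ℝ)) (2*H-2)]
      linarith
    linarith [abs_nonneg (((v:ℝ)+1)^(2*H) + ((v:ℝ)-1)^(2*H) - 2*(v:ℝ)^(2*H))]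

lemma rho_neg (H : ℝ) (v : ℤ) : rhoFGN H (-v) = rhoFGN H v := by
  unfold rhoFGN
  push_cast
  rw [show -(v:ℝ) + 1 = -((v:ℝ) - 1) from by ring,
    show -(v:ℝ) - 1 = -((v:ℝ) + 1) from by ring, abs_neg, abs_neg, abs_neg]
  ring

lemma rho_int_bound {H : ℝ} (hH0 : 0 < H) (hH1 : H < 1) {w : ℤ} (hw : w ≠ 0) :
    |rhoFGN H w| ≤ 8 * (w.natAbs : ℝ) ^ (2 * H - 2) := by
  have hv : 1 ≤ w.natAbs := by omega
  rcases Int.natAbs_eq w with h | h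
  · rw [h]; exact rho_nat_bound hH0 hH1 hv
  · rw [h, rho_neg, show ((-(w.natAbs:ℤ)).natAbs) = w.natAbs from by omega]
    exact rho_nat_bound hH0 hH1 hv

lemma rho_zero {H : ℝ} (hH0 : 0 < H) : rhoFGN H 0 = 1 := by
  unfold rhoFGN
  norm_num [Real.zero_rpow (by positivity : (2*H) ≠ 0)]

lemma aux_pow_sum {s' : ℝ} (h0 : 0 < s') (h1 : s' ≤ 1) (N : ℕ) :
    ∑ v ∈ Finset.range N, ((v : ℝ) + 1) ^ (s' - 1) ≤ (N : ℝ) ^ s' / s' := by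
  rw [le_div_iff₀ h0]
  have tel : ∑ v ∈ Finset.range N, (((v + 1 : ℕ) : ℝ) ^ s' - ((v : ℕ) : ℝ) ^ s')
      = ((N : ℝ)) ^ s' - ((0 : ℕ) : ℝ) ^ s' :=
    Finset.sum_range_sub (fun v => ((v : ℕ) : ℝ) ^ s') N
  rw [show ((0:ℕ):ℝ) = (0:ℝ) from by norm_num, Real.zero_rpow h0.ne', sub_zero] at tel
  rw [Finset.sum_mul]
  rw [← tel]
  apply Finset.sum_le_sum
  intro v _
  set w : ℝ := (v : ℝ) + 1 with hw
  have hw1 : (1:ℝ) ≤ w := by rw [hw]; have := Nat.cast_nonneg (α := ℝ) v; linarith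
  have hw0 : (0:ℝ) < w := by linarith
  have bern : (1 + (-1/w)) ^ s' ≤ 1 + s' * (-1/w) :=
    rpow_one_add_le_one_add_mul_self
      (by have h := (div_le_one hw0).mpr hw1; rw [neg_div]; linarith) h0.le h1
  have e1 : 1 + (-1/w) = (w - 1)/w := by field_simp; ring
  have e2 : (v:ℝ) = w - 1 := by rw [hw]; ring
  have e3 : ((v:ℝ)) ^ s' = w ^ s' * ((w-1)/w) ^ s' := by
    rw [e2, ← Real.mul_rpow hw0.le (div_nonneg (by linarith) hw0.le)]
    congr 1
    field_simp
  have e4 : w ^ (s' - 1) = w ^ s' / w := Real.rpow_sub_one hw0.ne' s'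
  have hws : (0:ℝ) ≤ w ^ s' := Real.rpow_nonneg hw0.le _
  have step : ((v:ℝ)) ^ s' ≤ w ^ s' * (1 + s' * (-1/w)) := by
    rw [e3]
    apply mul_le_mul_of_nonneg_left _ hws
    rw [← e1]
    exact bern
  have expand : w ^ s' * (1 + s' * (-1/w)) = w ^ s' - w ^ (s'-1) * s' := by
    rw [e4]; field_simp; ring
  push_cast
  push_cast at step expand
  nlinarith [step, expand]

lemma aux_maxsum {s' : ℝ} (h0 : 0 < s') (h1 : s' ≤ 1) (N : ℕ) :
    ∑ v ∈ Finset.range N, ((v.max 1 : ℕ) : ℝ) ^ (s' - 1) ≤ 1 + (N : ℝ) ^ s' / s' := by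
  cases N with
  | zero => simp [Real.zero_rpow h0.ne']
  | succ n =>
    rw [Finset.sum_range_succ']
    have e0 : (((Nat.max 0 1 : ℕ)) : ℝ) ^ (s' - 1) = 1 := by norm_num
    rw [e0]
    have e1 : ∀ i : ℕ, (((i+1).max 1 : ℕ) : ℝ) ^ (s' - 1) = ((i:ℝ) + 1) ^ (s' - 1) := by
      intro i
      congr 1
      have : (i + 1).max 1 = i + 1 := Nat.max_eq_left (by omega)
      rw [this]
      push_cast; ring
    rw [Finset.sum_congr rfl (fun i _ => e1 i)]
    have h2 : ∑ i ∈ Finset.range n, ((i:ℝ) + 1) ^ (s' - 1)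
        ≤ ∑ i ∈ Finset.range (n+1), ((i:ℝ) + 1) ^ (s' - 1) :=
      Finset.sum_le_sum_of_subset_of_nonneg
        (Finset.range_subset_range.mpr (by omega))
        (fun i _ _ => Real.rpow_nonneg (by positivity) _)
    have h3 := aux_pow_sum h0 h1 (n+1)
    push_cast at h3 ⊢
    linarith

lemma aux_row (N k : ℕ) (hk : k ∈ Finset.range N) (G : ℕ → ℝ) (hG : ∀ v, 0 ≤ G v) :
    ∑ l ∈ Finset.range N, G ((k : ℤ) - (l : ℤ)).natAbs ≤ 2 * ∑ v ∈ Finset.range N, G v := by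
  have hkN : k < N := Finset.mem_range.mp hk
  have hsplit := Finset.sum_filter_add_sum_filter_not (Finset.range N) (fun l => l ≤ k)
    (fun l => G ((k : ℤ) - (l : ℤ)).natAbs)
  set A := (Finset.range N).filter (fun l => l ≤ k) with hA
  set B := (Finset.range N).filter (fun l => ¬ l ≤ k) with hB
  have hA1 : ∑ l ∈ A, G ((k : ℤ) - (l : ℤ)).natAbs = ∑ l ∈ A, G (k - l) := by
    apply Finset.sum_congr rfl
    intro l hl
    have : l ≤ k := (Finset.mem_filter.mp hl).2
    congr 1
    omega
  have hA2 : ∑ l ∈ A, G (k - l) ≤ ∑ v ∈ Finset.range N, G v := by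
    rw [show ∑ l ∈ A, G (k - l) = ∑ v ∈ A.image (fun l => k - l), G v from
      (Finset.sum_image (fun x hx y hy hxy => by
        have hx' : x ≤ k := (Finset.mem_filter.mp hx).2
        have hy' : y ≤ k := (Finset.mem_filter.mp hy).2
        omega)).symm]
    apply Finset.sum_le_sum_of_subset_of_nonneg _ (fun i _ _ => hG i)
    intro v hv
    obtain ⟨l, hl, rfl⟩ := Finset.mem_image.mp hv
    exact Finset.mem_range.mpr (by omega)
  have hB1 : ∑ l ∈ B, G ((k : ℤ) - (l : ℤ)).natAbs = ∑ l ∈ B, G (l - k) := by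
    apply Finset.sum_congr rfl
    intro l hl
    have : ¬ l ≤ k := (Finset.mem_filter.mp hl).2
    congr 1
    omega
  have hB2 : ∑ l ∈ B, G (l - k) ≤ ∑ v ∈ Finset.range N, G v := by
    rw [show ∑ l ∈ B, G (l - k) = ∑ v ∈ B.image (fun l => l - k), G v from
      (Finset.sum_image (fun x hx y hy hxy => by
        have hx' : ¬ x ≤ k := (Finset.mem_filter.mp hx).2
        have hy' : ¬ y ≤ k := (Finset.mem_filter.mp hy).2
        omega)).symm]
    apply Finset.sum_le_sum_of_subset_of_nonneg _ (fun i _ _ => hG i)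
    intro v hv
    obtain ⟨l, hl, rfl⟩ := Finset.mem_image.mp hv
    have := Finset.mem_range.mp (Finset.mem_filter.mp hl).1
    exact Finset.mem_range.mpr (by omega)
  calc ∑ l ∈ Finset.range N, G ((k : ℤ) - (l : ℤ)).natAbs
      = ∑ l ∈ A, G ((k : ℤ) - (l : ℤ)).natAbs + ∑ l ∈ B, G ((k : ℤ) - (l : ℤ)).natAbs :=
        hsplit.symm
    _ ≤ 2 * ∑ v ∈ Finset.range N, G v := by
        rw [hA1, hB1]; linarith

/-- For `p ≥ 1`, `H₀ ∈ (0, 1 − 1/(2p))`, `H₁ ∈ (1 − 1/(2p), 1)` and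
`H̄ = (H₀ + H₁)/2`, one has `N^{p(1−H₁)−3/2} Σ_{k,l=0}^{N−1} ρ_{H̄}(k−l)^p → 0` as
`N → ∞`. -/
theorem stmt17 (p : ℕ) (hp : 1 ≤ p) (H₀ H₁ : ℝ)
    (hH₀ : H₀ ∈ Set.Ioo (0 : ℝ) (1 - 1 / (2 * (p : ℝ))))
    (hH₁ : H₁ ∈ Set.Ioo (1 - 1 / (2 * (p : ℝ))) 1) :
    Tendsto
      (fun N : ℕ => (N : ℝ) ^ ((p : ℝ) * (1 - H₁) - 3 / 2) *
        ∑ k ∈ Finset.range N, ∑ l ∈ Finset.range N,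
          rhoFGN ((H₀ + H₁) / 2) ((k : ℤ) - (l : ℤ)) ^ p)
      atTop (𝓝 0) := by
  obtain ⟨hH₀0, hH₀1⟩ := hH₀
  obtain ⟨hH₁0, hH₁1⟩ := hH₁
  have hp1 : (1 : ℝ) ≤ (p : ℝ) := by exact_mod_cast hp
  have hp0 : (0 : ℝ) < (p : ℝ) := by linarith
  have h2p : (1 : ℝ) / (2 * (p : ℝ)) ≤ 1 / 2 :=
    one_div_le_one_div_of_le (by norm_num) (by linarith)
  have h2p0 : (0 : ℝ) < 1 / (2 * (p : ℝ)) := by positivity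
  set Hb : ℝ := (H₀ + H₁) / 2 with hHb_def
  have hHb0 : 0 < Hb := by rw [hHb_def]; linarith
  have hHb1 : Hb < 1 := by rw [hHb_def]; linarith
  -- key quantities
  have hq1 : (p : ℝ) * (1 - H₁) < 1 / 2 := by
    have h1 : 1 - H₁ < 1 / (2 * (p : ℝ)) := by linarith
    have h2 : (p : ℝ) * (1 - H₁) < (p : ℝ) * (1 / (2 * (p : ℝ))) :=
      mul_lt_mul_of_pos_left h1 hp0
    have h3 : (p : ℝ) * (1 / (2 * (p : ℝ))) = 1 / 2 := by
      field_simp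
    linarith
  have hq0 : 1 / 2 < (p : ℝ) * (1 - H₀) := by
    have h1 : 1 / (2 * (p : ℝ)) < 1 - H₀ := by linarith
    have h2 : (p : ℝ) * (1 / (2 * (p : ℝ))) < (p : ℝ) * (1 - H₀) :=
      mul_lt_mul_of_pos_left h1 hp0
    have h3 : (p : ℝ) * (1 / (2 * (p : ℝ))) = 1 / 2 := by
      field_simp
    linarith
  have hq1' : 0 ≤ (p : ℝ) * (1 - H₁) := mul_nonneg hp0.le (by linarith)
  set ε : ℝ := (1 / 2 - (p : ℝ) * (1 - H₁)) / 2 with hε_def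
  have hε : 0 < ε := by rw [hε_def]; linarith
  have hε4 : ε ≤ 1 / 4 := by rw [hε_def]; linarith
  set γ : ℝ := (p : ℝ) * (2 * Hb - 2) with hγ_def
  have hγ0 : γ < 0 := mul_neg_of_pos_of_neg hp0 (by linarith)
  set γ' : ℝ := max γ (-1 + ε) with hγ'_def
  have hγ'γ : γ ≤ γ' := le_max_left _ _
  have hγ'ε : -1 + ε ≤ γ' := le_max_right _ _
  have hγ'0 : γ' < 0 := max_lt hγ0 (by linarith)
  set s' : ℝ := γ' + 1 with hs'_def
  have hs'0 : 0 < s' := by rw [hs'_def]; linarith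
  have hs'1 : s' ≤ 1 := by rw [hs'_def]; linarith
  -- the exponent bound
  have hE : (p : ℝ) * (1 - H₁) - 3 / 2 + 1 + s' < 0 := by
    rcases le_or_gt (-1 + ε) γ with h | h
    · have heq : γ' = γ := by rw [hγ'_def]; exact max_eq_left h
      have expand : (p : ℝ) * (1 - H₁) + (p : ℝ) * (2 * ((H₀ + H₁) / 2) - 2)
          = -((p : ℝ) * (1 - H₀)) := by ring
      rw [hs'_def, heq, hγ_def, hHb_def]
      linarith
    · have heq : γ' = -1 + ε := by rw [hγ'_def]; exact max_eq_right h.le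
      rw [hs'_def, heq, hε_def]
      linarith
  set E : ℝ := (p : ℝ) * (1 - H₁) - 3 / 2 + 1 + s' with hE_def
  set C : ℝ := 2 * (8 : ℝ) ^ p * (1 + 1 / s') with hC_def
  have hC0 : 0 ≤ C := by
    rw [hC_def]
    have : (0:ℝ) < 1 + 1/s' := by positivity
    positivity
  -- the function G
  set G : ℕ → ℝ := fun v => (8 : ℝ) ^ p * ((v.max 1 : ℕ) : ℝ) ^ (s' - 1) with hG_def
  have hGval : ∀ v : ℕ, G v = (8 : ℝ) ^ p * ((v.max 1 : ℕ) : ℝ) ^ (s' - 1) :=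
    fun v => rfl
  have hGnn : ∀ v, 0 ≤ G v := by
    intro v
    rw [hG_def]
    have : (0:ℝ) ≤ ((v.max 1 : ℕ) : ℝ) := Nat.cast_nonneg _
    positivity
  -- pointwise bound
  have hpt : ∀ k l : ℕ, |rhoFGN Hb ((k : ℤ) - (l : ℤ)) ^ p|
      ≤ G ((k : ℤ) - (l : ℤ)).natAbs := by
    intro k l
    set w : ℤ := (k : ℤ) - (l : ℤ) with hw_def
    by_cases hw : w = 0
    · rw [hw, rho_zero hHb0, one_pow, abs_one]
      simp only [Int.natAbs_zero]
      rw [hGval]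
      have e : ((Nat.max 0 1 : ℕ) : ℝ) = 1 := by norm_num
      rw [e, Real.one_rpow, mul_one]
      exact one_le_pow₀ (by norm_num : (1:ℝ) ≤ 8)
    · have hv1 : 1 ≤ w.natAbs := by omega
      have hv1' : (1 : ℝ) ≤ (w.natAbs : ℝ) := by exact_mod_cast hv1
      have hb := rho_int_bound hHb0 hHb1 hw
      rw [abs_pow]
      calc |rhoFGN Hb w| ^ p
          ≤ (8 * (w.natAbs : ℝ) ^ (2 * Hb - 2)) ^ p :=
            pow_le_pow_left₀ (abs_nonneg _) hb p
        _ = (8:ℝ) ^ p * ((w.natAbs : ℝ) ^ (2 * Hb - 2)) ^ p := mul_pow _ _ _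
        _ ≤ G w.natAbs := by
            rw [hGval]
            have e1 : ((w.natAbs : ℝ) ^ (2 * Hb - 2)) ^ p
                = (w.natAbs : ℝ) ^ ((2 * Hb - 2) * (p : ℝ)) := by
              rw [Real.rpow_mul (by linarith : (0:ℝ) ≤ (w.natAbs : ℝ)),
                Real.rpow_natCast]
            have e2 : ((w.natAbs.max 1 : ℕ) : ℝ) = (w.natAbs : ℝ) := by
              congr 1; exact Nat.max_eq_left hv1
            rw [e1, e2]
            apply mul_le_mul_of_nonneg_left _ (by positivity)
            apply Real.rpow_le_rpow_of_exponent_le hv1'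
            have : (2 * Hb - 2) * (p : ℝ) = γ := by rw [hγ_def]; ring
            rw [this, hs'_def]
            linarith
  -- the bound function
  have key : ∀ N : ℕ, 1 ≤ N →
      ‖(N : ℝ) ^ ((p : ℝ) * (1 - H₁) - 3 / 2) *
        ∑ k ∈ Finset.range N, ∑ l ∈ Finset.range N, rhoFGN Hb ((k : ℤ) - (l : ℤ)) ^ p‖
      ≤ C * (N : ℝ) ^ E := by
    intro N hN
    have hN1 : (1 : ℝ) ≤ (N : ℝ) := by exact_mod_cast hN
    have hN0 : (0 : ℝ) < (N : ℝ) := by linarith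
    have hNs : (1 : ℝ) ≤ (N : ℝ) ^ s' := Real.one_le_rpow hN1 hs'0.le
    have hNa : (0:ℝ) ≤ (N:ℝ) ^ ((p : ℝ) * (1 - H₁) - 3 / 2) := Real.rpow_nonneg hN0.le _
    rw [norm_mul, Real.norm_eq_abs, Real.norm_eq_abs, abs_of_nonneg hNa]
    set T := ∑ v ∈ Finset.range N, G v with hT_def
    have hTnn : 0 ≤ T := Finset.sum_nonneg (fun v _ => hGnn v)
    have hS : |∑ k ∈ Finset.range N, ∑ l ∈ Finset.range N, rhoFGN Hb ((k:ℤ)-(l:ℤ)) ^ p|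
        ≤ (N:ℝ) * (2 * T) := by
      calc |∑ k ∈ Finset.range N, ∑ l ∈ Finset.range N, rhoFGN Hb ((k:ℤ)-(l:ℤ)) ^ p|
          ≤ ∑ k ∈ Finset.range N, |∑ l ∈ Finset.range N, rhoFGN Hb ((k:ℤ)-(l:ℤ)) ^ p| :=
            Finset.abs_sum_le_sum_abs _ _
        _ ≤ ∑ _k ∈ Finset.range N, (2 * T) := by
            apply Finset.sum_le_sum
            intro k hk
            calc |∑ l ∈ Finset.range N, rhoFGN Hb ((k:ℤ)-(l:ℤ)) ^ p|
                ≤ ∑ l ∈ Finset.range N, |rhoFGN Hb ((k:ℤ)-(l:ℤ)) ^ p| :=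
                  Finset.abs_sum_le_sum_abs _ _
              _ ≤ ∑ l ∈ Finset.range N, G (((k:ℤ)-(l:ℤ)).natAbs) :=
                  Finset.sum_le_sum (fun l _ => hpt k l)
              _ ≤ 2 * T := aux_row N k hk G hGnn
        _ = (N:ℝ) * (2 * T) := by
            rw [Finset.sum_const, Finset.card_range, nsmul_eq_mul]
    have hT : T ≤ (8:ℝ)^p * ((1 + 1/s') * (N:ℝ)^s') := by
      have h1 : T = (8:ℝ)^p * ∑ v ∈ Finset.range N, ((v.max 1 : ℕ):ℝ)^(s'-1) := by
        rw [hT_def, Finset.mul_sum]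
      have h2 := aux_maxsum hs'0 hs'1 N
      have h3 : (1:ℝ) + (N:ℝ)^s'/s' ≤ (1 + 1/s') * (N:ℝ)^s' := by
        have e : (1 + 1/s') * (N:ℝ)^s' = (N:ℝ)^s' + (N:ℝ)^s'/s' := by
          field_simp
        rw [e]
        linarith
      have h8 : (0:ℝ) ≤ (8:ℝ)^p := by positivity
      rw [h1]
      calc (8:ℝ)^p * ∑ v ∈ Finset.range N, ((v.max 1:ℕ):ℝ)^(s'-1)
          ≤ (8:ℝ)^p * (1 + (N:ℝ)^s'/s') := mul_le_mul_of_nonneg_left h2 h8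
        _ ≤ (8:ℝ)^p * ((1+1/s')*(N:ℝ)^s') := mul_le_mul_of_nonneg_left h3 h8
    have hpow : (N:ℝ)^((p:ℝ)*(1-H₁) - 3/2) * (N:ℝ) * (N:ℝ)^s' = (N:ℝ)^E := by
      rw [hE_def]
      calc (N:ℝ)^((p:ℝ)*(1-H₁) - 3/2) * (N:ℝ) * (N:ℝ)^s'
          = (N:ℝ)^((p:ℝ)*(1-H₁) - 3/2) * (N:ℝ)^(1:ℝ) * (N:ℝ)^s' := by
            rw [Real.rpow_one]
        _ = (N:ℝ)^((p:ℝ)*(1-H₁) - 3/2 + 1 + s') := by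
            rw [← Real.rpow_add hN0, ← Real.rpow_add hN0]
    calc (N:ℝ)^((p:ℝ)*(1-H₁) - 3/2) *
          |∑ k ∈ Finset.range N, ∑ l ∈ Finset.range N, rhoFGN Hb ((k:ℤ)-(l:ℤ)) ^ p|
        ≤ (N:ℝ)^((p:ℝ)*(1-H₁) - 3/2) * ((N:ℝ) * (2 * T)) :=
          mul_le_mul_of_nonneg_left hS hNa
      _ ≤ (N:ℝ)^((p:ℝ)*(1-H₁) - 3/2) *
            ((N:ℝ) * (2 * ((8:ℝ)^p * ((1 + 1/s') * (N:ℝ)^s')))) := by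
          apply mul_le_mul_of_nonneg_left _ hNa
          apply mul_le_mul_of_nonneg_left _ hN0.le
          linarith
      _ = C * ((N:ℝ)^((p:ℝ)*(1-H₁) - 3/2) * (N:ℝ) * (N:ℝ)^s') := by
          rw [hC_def]; ring
      _ = C * (N:ℝ)^E := by rw [hpow]
  apply squeeze_zero_norm' (a := fun N : ℕ => C * (N:ℝ)^E)
  · filter_upwards [eventually_ge_atTop 1] with N hN
    exact key N hN
  · have h1 : Tendsto (fun x : ℝ => x ^ E) atTop (𝓝 0) := by
      have := tendsto_rpow_neg_atTop (y := -E) (by linarith)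
      simpa [neg_neg] using this
    have h2 : Tendsto (fun N : ℕ => ((N:ℝ))^E) atTop (𝓝 0) :=
      h1.comp tendsto_natCast_atTop_atTop
    simpa using h2.const_mul C
end
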